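/- arXiv:1402.2558 — 2 statements merged into one kernel-verified Lean document; each statement's English description precedes it below -/
import Mathlib

section
/- Suppose condition (B_p) holds for some p > 1 and condition (Q_∞) holds. Let D_n = max_{τ_n ≤ m ≤ τ_{n+1}} |X_m − X_{τ_n}|. Then for any q ∈ (0,p), sup_x P[D_n ≥ d | X_{τ_n} = x] = O(d^{−q}) as d → ∞, and sup_x E[D_n^q | X_{τ_n} = x] < ∞. -/
open MeasureTheory Filter Topology Asymptotics
open scoped ENNReal NNReal

/-- A time-homogeneous Markov chain on a measurable state space `E`, encoded via the family
`P z` of laws (on trajectory space) of the chain started at `z`.  The field `markov` is the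
time-homogeneous Markov property: conditionally on the event `{ω n = w}` intersected with any
event `B` depending only on the first `n+1` coordinates, the shifted trajectory has law `P w`. -/
structure MChain (E : Type*) [MeasurableSpace E] where
  P : E → MeasureTheory.Measure (ℕ → E)
  isProb : ∀ z, MeasureTheory.IsProbabilityMeasure (P z)
  init : ∀ z, P z {ω | ω 0 = z} = 1
  markov : ∀ (z : E) (n : ℕ) (w : E) (A B : Set (ℕ → E)), MeasurableSet A →
    (∀ ω ω' : ℕ → E, (∀ k, k ≤ n → ω k = ω' k) → ω ∈ B → ω' ∈ B) →
    P z (B ∩ {ω | ω n = w} ∩ {ω | (fun k => ω (n + k)) ∈ A})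
      = P z (B ∩ {ω | ω n = w}) * P w A

namespace MChain

variable {E : Type*} [MeasurableSpace E]

/-- Irreducibility: every state can be reached from every state with positive probability. -/
def Irreducible (X : MChain E) : Prop := ∀ z w : E, ∃ n : ℕ, X.P z {ω | ω n = w} ≠ 0

/-- Recurrence: from every state, the chain returns to it almost surely. -/
def Recurrent (X : MChain E) : Prop := ∀ z : E, X.P z {ω | ∃ n, 1 ≤ n ∧ ω n = z} = 1

def Transient (X : MChain E) : Prop := ¬ X.Recurrent

/-- The first return time to `z` (with junk value `0`, via `sInf ∅ = 0`, if there is no return). -/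
noncomputable def returnTime (z : E) (ω : ℕ → E) : ℕ := sInf {n | 1 ≤ n ∧ ω n = z}

/-- Positive recurrence: recurrent, with finite mean return times. -/
def PositiveRecurrent (X : MChain E) : Prop :=
  X.Recurrent ∧ ∀ z : E, (∫⁻ ω, (returnTime z ω : ℝ≥0∞) ∂(X.P z)) ≠ ⊤

def NullRecurrent (X : MChain E) : Prop := X.Recurrent ∧ ¬ X.PositiveRecurrent

end MChain

section HalfStrip

variable {S : Type*} [Fintype S] [DecidableEq S] [Nonempty S]
  [MeasurableSpace S] [MeasurableSingletonClass S]

/-- `qhat X x i j` is the probability that the `S`-coordinate moves from `i` to `j` when the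
`ℕ`-coordinate is at `x`; this is `q_x(i,j) = Σ_y p(x,i,y,j)` of the paper. -/
noncomputable def qhat (X : MChain (ℕ × S)) (x : ℕ) (i j : S) : ℝ :=
  (X.P (x, i) {ω | (ω 1).2 = j}).toReal

/-- `stepMoment X k x i = μ_k(x,i) = E[(X_{n+1}-X_n)^k | X_n = x, η_n = i]`. -/
noncomputable def stepMoment (X : MChain (ℕ × S)) (k : ℕ) (x : ℕ) (i : S) : ℝ :=
  ∫ ω, (((ω 1).1 : ℝ) - (x : ℝ)) ^ k ∂(X.P (x, i))

/-- Condition (B_p): uniformly bounded conditional `p`-th moments of the jumps of the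
`ℕ`-coordinate (by the Markov property, the conditional moment given `F_n` is a function of
the current state only). -/
def CondB (X : MChain (ℕ × S)) (p : ℝ) : Prop :=
  ∃ C : ℝ≥0∞, C ≠ ⊤ ∧ ∀ (x : ℕ) (i : S),
    (∫⁻ ω, ENNReal.ofReal (|((ω 1).1 : ℝ) - (x : ℝ)| ^ p) ∂(X.P (x, i))) ≤ C

def IsStochasticMatrix (Q : S → S → ℝ) : Prop :=
  (∀ i j, 0 ≤ Q i j) ∧ ∀ i, (∑ j, Q i j) = 1

def IsIrreducibleMatrix (Q : S → S → ℝ) : Prop :=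
  ∀ i j, ∃ n : ℕ, 0 < ((Matrix.of Q) ^ n) i j

/-- Aperiodicity (for a finite irreducible stochastic matrix, eventual positivity of the
diagonal entries of the powers is equivalent to aperiodicity). -/
def IsAperiodicMatrix (Q : S → S → ℝ) : Prop :=
  ∀ i, ∃ N : ℕ, ∀ n, N ≤ n → 0 < ((Matrix.of Q) ^ n) i i

/-- `pst` is a (strictly positive) stationary distribution for `Q`. -/
def IsStationaryDist (Q : S → S → ℝ) (pst : S → ℝ) : Prop :=
  (∀ i, 0 < pst i) ∧ (∑ i, pst i) = 1 ∧ ∀ j, (∑ i, pst i * Q i j) = pst j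

/-- Condition (Q_∞): the transition matrix of the `S`-coordinate converges as `x → ∞` to an
irreducible stochastic matrix `Q`. -/
def CondQ (X : MChain (ℕ × S)) (Q : S → S → ℝ) : Prop :=
  (∀ i j, Tendsto (fun x : ℕ => qhat X x i j) atTop (nhds (Q i j))) ∧
    IsStochasticMatrix Q ∧ IsIrreducibleMatrix Q

/-- Condition (Q_∞^+): as (Q_∞), with a power-law rate of convergence. -/
def CondQplus (X : MChain (ℕ × S)) (Q : S → S → ℝ) : Prop :=
  (∃ δ₀ : ℝ, 0 < δ₀ ∧ ∀ i j,
      (fun x : ℕ => qhat X x i j - Q i j) =O[atTop] fun x : ℕ => (x : ℝ) ^ (-δ₀)) ∧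
    IsStochasticMatrix Q ∧ IsIrreducibleMatrix Q

/-- Condition (M_C): asymptotically constant drifts, `μ₁(x,i) = d_i + o(1)`. -/
def CondMC (X : MChain (ℕ × S)) (d : S → ℝ) : Prop :=
  ∀ i, Tendsto (fun x : ℕ => stepMoment X 1 x i) atTop (nhds (d i))

/-- Condition (M_L): Lamperti-type drifts, `μ₁(x,i) = c_i/x + o(1/x)`, `μ₂(x,i) = s_i² + o(1)`,
with at least one `s_i²` nonzero. -/
def CondML (X : MChain (ℕ × S)) (c s2 : S → ℝ) : Prop :=
  (∀ i, 0 ≤ s2 i) ∧ (∃ i, s2 i ≠ 0) ∧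
    (∀ i, Tendsto (fun x : ℕ => (x : ℝ) * stepMoment X 1 x i) atTop (nhds (c i))) ∧
    (∀ i, Tendsto (fun x : ℕ => stepMoment X 2 x i) atTop (nhds (s2 i)))

/-- Condition (M_L^+): Lamperti-type drifts with power-law error bounds. -/
def CondMLplus (X : MChain (ℕ × S)) (c s2 : S → ℝ) : Prop :=
  (∀ i, 0 ≤ s2 i) ∧ (∃ i, s2 i ≠ 0) ∧
    ∃ δ₁ : ℝ, 0 < δ₁ ∧ ∀ i,
      ((fun x : ℕ => stepMoment X 1 x i - c i / (x : ℝ)) =O[atTop]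
        fun x : ℕ => (x : ℝ) ^ (-1 - δ₁)) ∧
      ((fun x : ℕ => stepMoment X 2 x i - s2 i) =O[atTop] fun x : ℕ => (x : ℝ) ^ (-δ₁))

/-- Successive visit times `τ_0 < τ_1 < ⋯` of the `S`-coordinate to the distinguished state
`s0` (junk value, via `sInf ∅ = 0`, if there is no such visit). -/
noncomputable def tauSeq (s0 : S) (ω : ℕ → ℕ × S) : ℕ → ℕ
  | 0 => sInf {n | (ω n).2 = s0}
  | m + 1 => sInf {n | tauSeq s0 ω m < n ∧ (ω n).2 = s0}

/-- `τ`, the first positive time at which the `S`-coordinate visits `s0`. -/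
noncomputable def tauRet (s0 : S) (ω : ℕ → ℕ × S) : ℕ :=
  sInf {n | 1 ≤ n ∧ (ω n).2 = s0}

/-- `D_n`, the maximal displacement of the `ℕ`-coordinate during the `n`-th excursion. -/
noncomputable def Dexc (s0 : S) (n : ℕ) (ω : ℕ → ℕ × S) : ℕ :=
  Finset.sup (Finset.Icc (tauSeq s0 ω n) (tauSeq s0 ω (n + 1)))
    fun m => Nat.dist (ω m).1 (ω (tauSeq s0 ω n)).1

/-- `N(n) = max {k : τ_k ≤ n}`. -/
noncomputable def Ncount (s0 : S) (n : ℕ) (ω : ℕ → ℕ × S) : ℕ :=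
  sSup {k | tauSeq s0 ω k ≤ n}

end HalfStrip

/-- `Fdist a t` is the distribution function of the square root of a `Gamma(a,t)` random
variable: `F_{a,t}(x) = ∫_0^x 2 u^{2a-1} e^{-u²/t} / (t^a Γ(a)) du`. -/
noncomputable def Fdist (a t x : ℝ) : ℝ :=
  ∫ u in (0:ℝ)..x, 2 * u ^ (2 * a - 1) * Real.exp (-(u ^ 2) / t) / (t ^ a * Real.Gamma a)

variable {S : Type*} [Fintype S] [DecidableEq S] [Nonempty S]
  [MeasurableSpace S] [MeasurableSingletonClass S]

set_option linter.unusedSectionVars false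
set_option linter.unusedVariables false
section Infra

variable {α : Type*} [MeasurableSpace α] [Countable α] [MeasurableSingletonClass α]

/-- A set determined by coordinates `≤ m` is measurable (for countable discrete `α`). -/
lemma measurableSet_cyl (m : ℕ) (B : Set (ℕ → α))
    (hB : ∀ ω ω' : ℕ → α, (∀ k ≤ m, ω k = ω' k) → ω ∈ B → ω' ∈ B) :
    MeasurableSet B := by
  classical
  set T : Set (Fin (m+1) → α) := {v | ∃ ω : ℕ → α, ω ∈ B ∧ ∀ k : Fin (m+1), ω (k : ℕ) = v k}
    with hT
  have hBeq : B = ⋃ v ∈ T, {ω : ℕ → α | ∀ k : Fin (m+1), ω (k : ℕ) = v k} := by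
    ext ω
    constructor
    · intro hω
      exact Set.mem_biUnion ⟨ω, hω, fun k => rfl⟩ (fun k => rfl)
    · intro hω
      rcases Set.mem_iUnion₂.1 hω with ⟨v, hv, hcyl⟩
      rcases hv with ⟨ω', hω', hω'v⟩
      refine hB ω' ω ?_ hω'
      intro k hk
      have hk' : k < m + 1 := Nat.lt_succ_of_le hk
      have h1 := hω'v ⟨k, hk'⟩
      have h2 := hcyl ⟨k, hk'⟩
      simp only at h1 h2
      rw [h1, h2]
  rw [hBeq]
  refine MeasurableSet.biUnion (Set.to_countable T) (fun v _ => ?_)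
  have : {ω : ℕ → α | ∀ k : Fin (m+1), ω (k:ℕ) = v k}
      = ⋂ k : Fin (m+1), (fun ω : ℕ → α => ω (k:ℕ)) ⁻¹' {v k} := by
    ext ω; simp [Set.mem_iInter]
  rw [this]
  exact MeasurableSet.iInter fun k => measurable_pi_apply _ (measurableSet_singleton _)

lemma measurable_shift (n : ℕ) : Measurable (fun (ω : ℕ → α) (k : ℕ) => ω (n + k)) :=
  measurable_pi_lambda _ (fun k => measurable_pi_apply _)

lemma measurableSet_coord (n : ℕ) (w : α) : MeasurableSet {ω : ℕ → α | ω n = w} := by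
  have : {ω : ℕ → α | ω n = w} = (fun ω : ℕ → α => ω n) ⁻¹' {w} := rfl
  rw [this]
  exact measurable_pi_apply n (measurableSet_singleton w)

namespace MChain

variable (X : MChain α)

lemma prob_le_one (z : α) (A : Set (ℕ → α)) : X.P z A ≤ 1 := by
  have := X.isProb z; exact MeasureTheory.prob_le_one

lemma meas_ne_top (z : α) (A : Set (ℕ → α)) : X.P z A ≠ ⊤ :=
  fun h => by simpa [h] using X.prob_le_one z A

/-- Intersecting with the (full-measure) initial condition does not change the measure. -/
lemma meas_inter_init (z : α) (A : Set (ℕ → α)) :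
    X.P z (A ∩ {ω | ω 0 = z}) = X.P z A := by
  have h0 : X.P z {ω : ℕ → α | ω 0 = z}ᶜ = 0 := by
    have hm := measurableSet_coord (α := α) 0 z
    have := X.isProb z
    rw [measure_compl hm (X.meas_ne_top z _), X.init z]
    simp
  exact measure_inter_conull h0

/-- Decomposition of a past event intersected with a shifted event, via the Markov property. -/
lemma decomp (z : α) (n : ℕ) (A B : Set (ℕ → α))
    (hA : MeasurableSet A) (hBm : MeasurableSet B)
    (hB : ∀ ω ω' : ℕ → α, (∀ k ≤ n, ω k = ω' k) → ω ∈ B → ω' ∈ B) :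
    X.P z (B ∩ {ω | (fun k => ω (n + k)) ∈ A})
      = ∑' w : α, X.P z (B ∩ {ω | ω n = w}) * X.P w A := by
  have hun : B ∩ {ω | (fun k => ω (n + k)) ∈ A}
      = ⋃ w : α, (B ∩ {ω | ω n = w} ∩ {ω | (fun k => ω (n + k)) ∈ A}) := by
    ext ω
    constructor
    · rintro ⟨h1, h2⟩
      exact Set.mem_iUnion.2 ⟨ω n, ⟨h1, rfl⟩, h2⟩
    · rintro hω
      rcases Set.mem_iUnion.1 hω with ⟨w, ⟨⟨h1, _⟩, h2⟩⟩
      exact ⟨h1, h2⟩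
  rw [hun, measure_iUnion ?_ ?_]
  · exact tsum_congr fun w => X.markov z n w A B hA hB
  · intro w w' hww'
    refine Set.disjoint_left.2 ?_
    rintro ω ⟨⟨_, h1⟩, _⟩ ⟨⟨_, h2⟩, _⟩
    exact hww' (h1.symm.trans h2)
  · intro w
    exact ((hBm.inter (measurableSet_coord n w)).inter ((measurable_shift n) hA))

/-- Total decomposition of a measurable set over the position at time `n`. -/
lemma decomp_univ (z : α) (n : ℕ) (B : Set (ℕ → α)) (hBm : MeasurableSet B) :
    X.P z B = ∑' w : α, X.P z (B ∩ {ω | ω n = w}) := by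
  have hun : B = ⋃ w : α, (B ∩ {ω | ω n = w}) := by
    ext ω
    constructor
    · intro h; exact Set.mem_iUnion.2 ⟨ω n, h, rfl⟩
    · intro h; rcases Set.mem_iUnion.1 h with ⟨w, h1, _⟩; exact h1
  nth_rewrite 1 [hun]
  rw [measure_iUnion ?_ ?_]
  · intro w w' hww'
    refine Set.disjoint_left.2 ?_
    rintro ω ⟨_, h1⟩ ⟨_, h2⟩
    exact hww' (h1.symm.trans h2)
  · exact fun w => hBm.inter (measurableSet_coord n w)

end MChain

end Infra

section MatrixPart

variable {S : Type*} [Fintype S] [DecidableEq S] [Nonempty S]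

lemma pow_entries_nonneg (Q : S → S → ℝ) (h : ∀ i j, 0 ≤ Q i j) :
    ∀ (n : ℕ) (i j : S), 0 ≤ ((Matrix.of Q) ^ n) i j := by
  intro n
  induction n with
  | zero =>
      intro i j
      rw [pow_zero]
      by_cases hij : i = j <;> simp [Matrix.one_apply, hij]
  | succ n ih =>
      intro i j
      rw [pow_succ, Matrix.mul_apply]
      exact Finset.sum_nonneg fun k _ => mul_nonneg (ih i k) (h k j)

lemma path_of_pow_pos (Q : S → S → ℝ) (h : ∀ i j, 0 ≤ Q i j) :
    ∀ (n : ℕ) (i j : S), 0 < ((Matrix.of Q) ^ n) i j →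
      ∃ c : ℕ → S, c 0 = i ∧ c n = j ∧ ∀ k < n, 0 < Q (c k) (c (k+1)) := by
  intro n
  induction n with
  | zero =>
      intro i j hpos
      rw [pow_zero] at hpos
      have hij : i = j := by
        by_contra hne
        rw [Matrix.one_apply_ne hne] at hpos
        exact lt_irrefl 0 hpos
      exact ⟨fun _ => i, rfl, hij ▸ rfl, fun k hk => absurd hk (Nat.not_lt_zero k)⟩
  | succ n ih =>
      intro i j hpos
      rw [pow_succ', Matrix.mul_apply] at hpos
      have hex : ∃ k : S, 0 < Matrix.of Q i k * ((Matrix.of Q) ^ n) k j := by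
        by_contra hno
        push_neg at hno
        have : ∑ k, Matrix.of Q i k * ((Matrix.of Q) ^ n) k j ≤ 0 :=
          Finset.sum_nonpos fun k _ => hno k
        linarith
      obtain ⟨k, hk⟩ := hex
      have h1 : 0 < Matrix.of Q i k := by
        rcases lt_or_eq_of_le (h i k) with h' | h'
        · exact h'
        · exfalso; rw [Matrix.of_apply] at hk; rw [← h'] at hk; simp at hk
      have h2 : 0 < ((Matrix.of Q) ^ n) k j := by
        rcases lt_or_eq_of_le (pow_entries_nonneg Q h n k j) with h' | h'
        · exact h'
        · exfalso; rw [← h'] at hk; simp at hk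
      obtain ⟨c, hc0, hcn, hedge⟩ := ih k j h2
      refine ⟨fun t => if t = 0 then i else c (t - 1), by simp, by simp [hcn], ?_⟩
      intro t ht
      rcases Nat.eq_zero_or_pos t with rfl | htpos
      · simpa [hc0] using h1
      · have ht1 : t - 1 < n := by omega
        have := hedge (t - 1) ht1
        have hts : ¬ (t = 0) := Nat.pos_iff_ne_zero.1 htpos
        simpa [hts, Nat.sub_add_cancel htpos] using this

/-- From every state there is a positive-length positive-probability `Q`-path to `s0`. -/
lemma exists_path_to (Q : S → S → ℝ) (hst : IsStochasticMatrix Q) (hir : IsIrreducibleMatrix Q)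
    (s0 : S) (i : S) :
    ∃ n : ℕ, 1 ≤ n ∧ ∃ c : ℕ → S, c 0 = i ∧ c n = s0 ∧ ∀ k < n, 0 < Q (c k) (c (k+1)) := by
  obtain ⟨h0, h1⟩ := hst
  -- first, one positive step out of i
  have hstep : ∃ j, 0 < Q i j := by
    by_contra hno
    push_neg at hno
    have : (∑ j, Q i j) ≤ 0 := Finset.sum_nonpos fun j _ => hno j
    rw [h1 i] at this; linarith
  obtain ⟨j, hj⟩ := hstep
  obtain ⟨n, hn⟩ := hir j s0
  obtain ⟨c, hc0, hcn, hedge⟩ := path_of_pow_pos Q h0 n j s0 hn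
  refine ⟨n + 1, Nat.le_add_left 1 n, fun t => if t = 0 then i else c (t - 1), by simp,
    by simp [hcn], ?_⟩
  intro t ht
  rcases Nat.eq_zero_or_pos t with rfl | htpos
  · simpa [hc0] using hj
  · have ht1 : t - 1 < n := by omega
    have := hedge (t - 1) ht1
    have hts : ¬ (t = 0) := Nat.pos_iff_ne_zero.1 htpos
    simpa [hts, Nat.sub_add_cancel htpos] using this

end MatrixPart

section Strip1

variable {S : Type*} [Fintype S] [DecidableEq S] [Nonempty S]
  [MeasurableSpace S] [MeasurableSingletonClass S]

/-- The event that the `S`-coordinate visits `s0` at some time in `[1, N]`. -/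
def hitEv (s0 : S) (N : ℕ) : Set (ℕ → ℕ × S) := {ω | ∃ k, 1 ≤ k ∧ k ≤ N ∧ (ω k).2 = s0}

lemma measurableSet_hitEv (s0 : S) (N : ℕ) : MeasurableSet (hitEv s0 N) := by
  refine measurableSet_cyl N _ ?_
  rintro ω ω' hagree ⟨k, h1, h2, h3⟩
  exact ⟨k, h1, h2, by rw [← hagree k h2]; exact h3⟩

lemma qhat_ofReal (X : MChain (ℕ × S)) (y : ℕ) (i j : S) :
    ENNReal.ofReal (qhat X y i j) = X.P (y, i) {ω | (ω 1).2 = j} :=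
  ENNReal.ofReal_toReal (X.meas_ne_top _ _)

/-- Markov's inequality for the jump of the first coordinate. -/
lemma jump_tail (X : MChain (ℕ × S)) (p : ℝ) (hp : 0 < p) (C : ℝ≥0∞)
    (hC : ∀ (x : ℕ) (i : S),
      (∫⁻ ω, ENNReal.ofReal (|((ω 1).1 : ℝ) - (x : ℝ)| ^ p) ∂(X.P (x, i))) ≤ C)
    (w : ℕ × S) (m : ℝ) (hm : 0 < m) :
    X.P w {ω | m ≤ |((ω 1).1 : ℝ) - (w.1 : ℝ)|} ≤ C / ENNReal.ofReal (m ^ p) := by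
  set f : (ℕ → ℕ × S) → ℝ≥0∞ :=
    fun ω => ENNReal.ofReal (|((ω 1).1 : ℝ) - (w.1 : ℝ)| ^ p) with hf
  have hfm : Measurable f := by
    have h1 : Measurable fun ω : ℕ → ℕ × S => (ω 1).1 :=
      (measurable_pi_apply 1).fst
    exact (measurable_of_countable
      (fun t : ℕ => ENNReal.ofReal (|(t : ℝ) - (w.1 : ℝ)| ^ p))).comp h1
  have hsub : {ω : ℕ → ℕ × S | m ≤ |((ω 1).1 : ℝ) - (w.1 : ℝ)|}
      ⊆ {ω | ENNReal.ofReal (m ^ p) ≤ f ω} := by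
    intro ω hω
    exact ENNReal.ofReal_le_ofReal
      (Real.rpow_le_rpow hm.le hω hp.le)
  have hkey := MeasureTheory.mul_meas_ge_le_lintegral₀ (μ := X.P w) hfm.aemeasurable
    (ENNReal.ofReal (m ^ p))
  have hCw : (∫⁻ ω, f ω ∂(X.P w)) ≤ C := by
    obtain ⟨x, i⟩ := w
    exact hC x i
  have h2 : ENNReal.ofReal (m ^ p) * X.P w {ω | m ≤ |((ω 1).1 : ℝ) - (w.1 : ℝ)|} ≤ C :=
    le_trans (le_trans (mul_le_mul_right (measure_mono hsub) _) hkey) hCw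
  rw [ENNReal.le_div_iff_mul_le (Or.inl ?_) (Or.inl ENNReal.ofReal_ne_top)]
  · rw [mul_comm]; exact h2
  · simp only [ne_eq, ENNReal.ofReal_eq_zero, not_le]
    exact Real.rpow_pos_of_pos hm p

lemma init_compl (X : MChain (ℕ × S)) (z : ℕ × S) : X.P z {ω | ω 0 = z}ᶜ = 0 := by
  have hm := measurableSet_coord (α := ℕ × S) 0 z
  have := X.isProb z
  rw [measure_compl hm (X.meas_ne_top z _), X.init z]
  simp

lemma point_compose (X : MChain (ℕ × S)) (z v w : ℕ × S) (n m : ℕ) :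
    X.P z {ω | ω n = v} * X.P v {ω | ω m = w} ≤ X.P z {ω | ω (n + m) = w} := by
  have hmk := X.markov z n v {ω | ω m = w} Set.univ (measurableSet_coord m w)
    (fun _ _ _ h => h)
  simp only [Set.univ_inter] at hmk
  calc X.P z {ω | ω n = v} * X.P v {ω | ω m = w}
      = X.P z ({ω | ω n = v} ∩ {ω | (fun k => ω (n + k)) ∈ {ω' | ω' m = w}}) := hmk.symm
    _ ≤ X.P z {ω | ω (n + m) = w} := by
        refine measure_mono ?_
        rintro ω ⟨_, h2⟩
        exact h2

lemma irr_pos_time (X : MChain (ℕ × S)) (hirr : X.Irreducible) (s0 : S) (z : ℕ × S) :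
    ∃ n, 1 ≤ n ∧ X.P z {ω | ω n = ((0 : ℕ), s0)} ≠ 0 := by
  set z' : ℕ × S := (z.1 + 1, z.2) with hz'
  have hne : z' ≠ z := by
    intro h
    have := congrArg Prod.fst h
    simp [hz'] at this
  obtain ⟨n₁, hn₁⟩ := hirr z z'
  obtain ⟨n₂, hn₂⟩ := hirr z' ((0 : ℕ), s0)
  have hn₁pos : 1 ≤ n₁ := by
    by_contra h
    push_neg at h
    interval_cases n₁
    apply hn₁
    have hsub : {ω : ℕ → ℕ × S | ω 0 = z'} ⊆ {ω : ℕ → ℕ × S | ω 0 = z}ᶜ := by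
      intro ω hω hz
      exact hne (hω ▸ hz ▸ rfl)
    exact le_antisymm (le_trans (measure_mono hsub) (le_of_eq (init_compl X z)))
      zero_le
  refine ⟨n₁ + n₂, le_trans hn₁pos (Nat.le_add_right _ _), ?_⟩
  have := point_compose X z z' ((0 : ℕ), s0) n₁ n₂
  intro h0
  rw [h0] at this
  exact mul_ne_zero hn₁ hn₂ (le_antisymm (le_trans this (le_of_eq rfl)) zero_le)

end Strip1

section Strip2

variable {S : Type*} [Fintype S] [DecidableEq S] [Nonempty S]
  [MeasurableSpace S] [MeasurableSingletonClass S]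

lemma one_step_est (X : MChain (ℕ × S)) (i j : S) (y M thr : ℕ) (b : ℝ) (hb : 0 ≤ b)
    (hyM : thr + M ≤ y)
    (hjump : X.P (y, i) {ω | (M : ℝ) ≤ |((ω 1).1 : ℝ) - (y : ℝ)|} ≤ ENNReal.ofReal (b/4))
    (hq : 3 * (b/4) ≤ qhat X y i j) :
    ENNReal.ofReal (b/2) ≤ X.P (y, i) {ω | (ω 1).2 = j ∧ thr ≤ (ω 1).1} := by
  set A : Set (ℕ → ℕ × S) := {ω | (ω 1).2 = j} with hA
  set Bad : Set (ℕ → ℕ × S) := {ω | (M : ℝ) ≤ |((ω 1).1 : ℝ) - (y : ℝ)|} with hBad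
  have hsub : A \ Bad ⊆ {ω | (ω 1).2 = j ∧ thr ≤ (ω 1).1} := by
    rintro ω ⟨h1, h2⟩
    refine ⟨h1, ?_⟩
    simp only [hBad, Set.mem_setOf_eq, not_le] at h2
    have h3 : (y : ℝ) - ((ω 1).1 : ℝ) < M := lt_of_le_of_lt (le_abs_self _) (by
      rw [abs_sub_comm] at h2; exact h2)
    have h4 : (thr : ℝ) < ((ω 1).1 : ℝ) := by
      have : (thr : ℝ) + (M : ℝ) ≤ (y : ℝ) := by exact_mod_cast hyM
      linarith
    exact_mod_cast le_of_lt (by exact_mod_cast h4 : (thr : ℕ) < (ω 1).1)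
  calc ENNReal.ofReal (b/2) = ENNReal.ofReal (3 * (b/4) - b/4) := by ring_nf
    _ = ENNReal.ofReal (3 * (b/4)) - ENNReal.ofReal (b/4) :=
        ENNReal.ofReal_sub _ (by linarith)
    _ ≤ X.P (y, i) A - X.P (y, i) Bad := by
        refine tsub_le_tsub ?_ hjump
        rw [← qhat_ofReal]
        exact ENNReal.ofReal_le_ofReal hq
    _ ≤ X.P (y, i) (A \ Bad) := le_measure_diff
    _ ≤ _ := measure_mono hsub

lemma path_estimate (X : MChain (ℕ × S)) (c : ℕ → S) (n : ℕ) (x1 M : ℕ) (b : ℝ)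
    (hb : 0 ≤ b) (hb1 : b ≤ 1)
    (hstep : ∀ k, k < n → ∀ y : ℕ, x1 + (n - k) * M ≤ y →
      ENNReal.ofReal (b/2) ≤
        X.P (y, c k) {ω | (ω 1).2 = c (k+1) ∧ x1 + (n - (k+1)) * M ≤ (ω 1).1}) :
    ∀ x : ℕ, x1 + n * M ≤ x →
      ENNReal.ofReal ((b/2)^n) ≤ X.P (x, c 0) {ω | (ω n).2 = c n} := by
  intro x hx
  set Ak : ℕ → Set (ℕ → ℕ × S) :=
    fun k => {ω | ∀ j ≤ k, (ω j).2 = c j ∧ x1 + (n - j) * M ≤ (ω j).1} with hAk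
  have hAkMeas : ∀ k, MeasurableSet (Ak k) := by
    intro k
    refine measurableSet_cyl k _ ?_
    rintro ω ω' hagree hω j hj
    rw [← hagree j hj]
    exact hω j hj
  have key : ∀ k, k ≤ n → ENNReal.ofReal ((b/2)^k) ≤ X.P (x, c 0) (Ak k) := by
    intro k
    induction k with
    | zero =>
        intro _
        have hsub : {ω : ℕ → ℕ × S | ω 0 = (x, c 0)} ⊆ Ak 0 := by
          intro ω hω j hj
          interval_cases j
          rw [Set.mem_setOf_eq] at hω
          rw [hω]
          exact ⟨rfl, by simpa using hx⟩
        calc ENNReal.ofReal ((b/2)^0) ≤ 1 := by simp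
          _ = X.P (x, c 0) {ω | ω 0 = (x, c 0)} := (X.init _).symm
          _ ≤ X.P (x, c 0) (Ak 0) := measure_mono hsub
    | succ k ih =>
        intro hk1
        have hkn : k < n := hk1
        have ihv := ih (le_of_lt hkn)
        set Astep : Set (ℕ → ℕ × S) :=
          {ω | (ω 1).2 = c (k+1) ∧ x1 + (n - (k+1)) * M ≤ (ω 1).1} with hAstep
        have hAstepMeas : MeasurableSet Astep := by
          refine measurableSet_cyl 1 _ ?_
          rintro ω ω' hagree ⟨h1, h2⟩
          have h := hagree 1 (le_refl 1)
          exact ⟨h ▸ h1, h ▸ h2⟩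
        have hdec : Ak (k+1) = Ak k ∩ {ω | (fun t => ω (k + t)) ∈ Astep} := by
          ext ω
          constructor
          · intro hω
            refine ⟨fun j hj => hω j (le_trans hj (Nat.le_succ k)), ?_⟩
            exact hω (k+1) (le_refl _)
          · rintro ⟨h1, h2⟩ j hj
            rcases Nat.lt_or_ge j (k+1) with h | h
            · exact h1 j (Nat.lt_succ_iff.1 h)
            · have : j = k + 1 := le_antisymm hj h
              rw [this]
              exact h2
        rw [hdec, X.decomp _ k Astep (Ak k) hAstepMeas (hAkMeas k)
          (fun ω ω' hagree hω j hj => by rw [← hagree j hj]; exact hω j hj)]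
        have hterm : ∀ w : ℕ × S,
            X.P (x, c 0) (Ak k ∩ {ω | ω k = w}) * ENNReal.ofReal (b/2)
              ≤ X.P (x, c 0) (Ak k ∩ {ω | ω k = w}) * X.P w Astep := by
          intro w
          rcases eq_or_ne (X.P (x, c 0) (Ak k ∩ {ω | ω k = w})) 0 with h0 | h0
          · rw [h0, zero_mul, zero_mul]
          · refine mul_le_mul_right ?_ _
            have hne : (Ak k ∩ {ω | ω k = w}).Nonempty := by
              by_contra hemp
              rw [Set.not_nonempty_iff_eq_empty] at hemp
              rw [hemp] at h0
              simp at h0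
            obtain ⟨ω, hω1, hω2⟩ := hne
            obtain ⟨hc2, hc1⟩ := hω1 k (le_refl k)
            rw [Set.mem_setOf_eq] at hω2
            have hw : w = ((ω k).1, c k) := by
              rw [← hω2, ← hc2]
            rw [hw]
            exact hstep k hkn (ω k).1 hc1
        calc ENNReal.ofReal ((b/2)^(k+1))
            = ENNReal.ofReal ((b/2)^k) * ENNReal.ofReal (b/2) := by
              rw [← ENNReal.ofReal_mul (by positivity), ← pow_succ]
          _ ≤ X.P (x, c 0) (Ak k) * ENNReal.ofReal (b/2) :=
              mul_le_mul_left ihv _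
          _ = (∑' w : ℕ × S, X.P (x, c 0) (Ak k ∩ {ω | ω k = w})) * ENNReal.ofReal (b/2) := by
              rw [← X.decomp_univ _ k (Ak k) (hAkMeas k)]
          _ = ∑' w : ℕ × S, X.P (x, c 0) (Ak k ∩ {ω | ω k = w}) * ENNReal.ofReal (b/2) :=
              ENNReal.tsum_mul_right.symm
          _ ≤ ∑' w : ℕ × S, X.P (x, c 0) (Ak k ∩ {ω | ω k = w}) * X.P w Astep :=
              ENNReal.tsum_le_tsum hterm
  have hfin := key n (le_refl n)
  refine le_trans hfin (measure_mono ?_)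
  intro ω hω
  exact (hω n (le_refl n)).1

end Strip2



section Strip3

variable {S : Type*} [Fintype S] [DecidableEq S] [Nonempty S]
  [MeasurableSpace S] [MeasurableSingletonClass S]

theorem uniform_hit (X : MChain (ℕ × S)) (hirr : X.Irreducible) (s0 : S)
    (p : ℝ) (hp : 1 < p) (hB : CondB X p) (Q : S → S → ℝ) (hQ : CondQ X Q) :
    ∃ (N : ℕ) (εr : ℝ), 1 ≤ N ∧ 0 < εr ∧ εr ≤ 1 ∧
      ∀ z : ℕ × S, ENNReal.ofReal εr ≤ X.P z (hitEv s0 N) := by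
  classical
  obtain ⟨hQtend, hQst, hQirr⟩ := hQ
  obtain ⟨C, hCne, hC⟩ := hB
  -- positive-probability paths to s0
  choose nn hnn1 cc hcc0 hccn hedge using fun i => exists_path_to Q hQst hQirr s0 i
  set N1 := Finset.univ.sup nn with hN1def
  have hnnN1 : ∀ i, nn i ≤ N1 := fun i => Finset.le_sup (Finset.mem_univ i)
  have hN1 : 1 ≤ N1 := le_trans (hnn1 (Classical.arbitrary S)) (hnnN1 _)
  -- minimal positive entry of Q
  set Edg := Finset.univ.filter (fun pr : S × S => 0 < Q pr.1 pr.2) with hEdgdef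
  have hEdgne : Edg.Nonempty := by
    set i0 := Classical.arbitrary S
    refine ⟨(cc i0 0, cc i0 1), Finset.mem_filter.2 ⟨Finset.mem_univ _, ?_⟩⟩
    exact hedge i0 0 (lt_of_lt_of_le one_pos (hnn1 i0))
  set β := Edg.inf' hEdgne (fun pr => Q pr.1 pr.2) with hβdef
  have hβpos : 0 < β :=
    (Finset.lt_inf'_iff hEdgne).2 fun pr hpr => (Finset.mem_filter.1 hpr).2
  have hβle : ∀ i j, 0 < Q i j → β ≤ Q i j := fun i j h =>
    Finset.inf'_le (b := (i, j)) _ (Finset.mem_filter.2 ⟨Finset.mem_univ _, h⟩)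
  have hβ1 : β ≤ 1 := by
    obtain ⟨pr, hpr⟩ := hEdgne
    refine le_trans (Finset.inf'_le _ hpr) ?_
    calc Q pr.1 pr.2 ≤ ∑ j, Q pr.1 j :=
          Finset.single_le_sum (fun j _ => hQst.1 pr.1 j) (Finset.mem_univ _)
      _ = 1 := hQst.2 pr.1
  -- threshold beyond which qhat is close to Q
  have hconv : ∀ᶠ x : ℕ in atTop, ∀ i j : S, |qhat X x i j - Q i j| < β/4 := by
    rw [Filter.eventually_all]
    intro i
    rw [Filter.eventually_all]
    intro j
    have hball : ∀ᶠ x : ℕ in atTop, qhat X x i j ∈ Metric.ball (Q i j) (β/4) :=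
      (hQtend i j) (Metric.ball_mem_nhds (Q i j) (by positivity : (0:ℝ) < β/4))
    refine hball.mono fun x hx => ?_
    simpa [Real.dist_eq] using hx
  obtain ⟨x1, hx1⟩ := eventually_atTop.1 hconv
  have hqlow : ∀ x, x1 ≤ x → ∀ i j, 0 < Q i j → 3 * (β/4) ≤ qhat X x i j := by
    intro x hx i j hQij
    have h1 := (abs_lt.1 (hx1 x hx i j)).1
    have h2 := hβle i j hQij
    linarith
  -- jump cutoff M
  set CBr := C.toReal with hCBrdef
  have hCBr : 0 ≤ CBr := ENNReal.toReal_nonneg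
  set M : ℕ := ⌈4 * CBr / β⌉₊ + 1 with hMdef
  have hM1 : 1 ≤ M := Nat.le_add_left 1 _
  have hM1r : (1:ℝ) ≤ (M:ℝ) := by exact_mod_cast hM1
  have hMb : CBr ≤ β/4 * (M:ℝ)^p := by
    have hMge : 4*CBr/β ≤ (M:ℝ) := le_trans (Nat.le_ceil _) (by exact_mod_cast Nat.le_succ _)
    have hpow : (M:ℝ) ≤ (M:ℝ)^p := by
      calc (M:ℝ) = (M:ℝ)^(1:ℝ) := (Real.rpow_one _).symm
        _ ≤ (M:ℝ)^p := Real.rpow_le_rpow_of_exponent_le hM1r (le_of_lt hp)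
    have h5 : 4*CBr/β ≤ (M:ℝ)^p := le_trans hMge hpow
    have h6 : β/4 * (4*CBr/β) ≤ β/4 * (M:ℝ)^p :=
      mul_le_mul_of_nonneg_left h5 (by positivity)
    calc CBr = β/4 * (4*CBr/β) := by field_simp
      _ ≤ β/4 * (M:ℝ)^p := h6
  have hjump : ∀ w : ℕ × S,
      X.P w {ω | ((M:ℕ):ℝ) ≤ |((ω 1).1 : ℝ) - (w.1 : ℝ)|} ≤ ENNReal.ofReal (β/4) := by
    intro w
    have hMpos : (0:ℝ) < (M:ℝ) := lt_of_lt_of_le one_pos hM1r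
    have h := jump_tail X p (lt_trans one_pos hp) C hC w (M:ℝ) hMpos
    refine le_trans h ?_
    have hCof : C = ENNReal.ofReal CBr := (ENNReal.ofReal_toReal hCne).symm
    rw [hCof, ENNReal.div_le_iff
      (ne_of_gt (ENNReal.ofReal_pos.2 (Real.rpow_pos_of_pos hMpos p)))
      ENNReal.ofReal_ne_top,
      ← ENNReal.ofReal_mul (by positivity : (0:ℝ) ≤ β/4)]
    exact ENNReal.ofReal_le_ofReal hMb
  -- large-x hitting estimate
  set x2 := x1 + N1 * M with hx2def
  have hlarge : ∀ x, x2 ≤ x → ∀ i : S,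
      ENNReal.ofReal ((β/2)^N1) ≤ X.P (x, i) (hitEv s0 N1) := by
    intro x hx i
    have hstep : ∀ k, k < nn i → ∀ y : ℕ, x1 + (nn i - k) * M ≤ y →
        ENNReal.ofReal (β/2) ≤
          X.P (y, cc i k) {ω | (ω 1).2 = cc i (k+1) ∧ x1 + (nn i - (k+1)) * M ≤ (ω 1).1} := by
      intro k hk y hy
      refine one_step_est X (cc i k) (cc i (k+1)) y M (x1 + (nn i - (k+1)) * M) β
        (le_of_lt hβpos) ?_ (hjump (y, cc i k)) ?_
      · have hsucc : nn i - (k+1) + 1 = nn i - k := by omega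
        have : (nn i - (k+1)) * M + M = (nn i - k) * M := by
          rw [← hsucc, Nat.succ_mul]
        omega
      · have hy1 : x1 ≤ y := le_trans (Nat.le_add_right _ _) hy
        exact hqlow y hy1 (cc i k) (cc i (k+1)) (hedge i k hk)
    have hpe := path_estimate X (cc i) (nn i) x1 M β (le_of_lt hβpos) hβ1 hstep x
      (by
        have : nn i * M ≤ N1 * M := Nat.mul_le_mul_right M (hnnN1 i)
        omega)
    rw [hcc0 i] at hpe
    refine le_trans (ENNReal.ofReal_le_ofReal ?_) (le_trans hpe (measure_mono ?_))
    · exact pow_le_pow_of_le_one (by positivity) (by linarith) (hnnN1 i)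
    · intro ω hω
      refine ⟨nn i, hnn1 i, hnnN1 i, ?_⟩
      rw [Set.mem_setOf_eq] at hω
      rw [hω, hccn i]
  -- finite region
  choose mz hmz1 hmz2 using fun z : ℕ × S => irr_pos_time X hirr s0 z
  set R : Finset (ℕ × S) := (Finset.range x2) ×ˢ (Finset.univ : Finset S) with hRdef
  set N2 := R.sup mz with hN2def
  set N := max N1 N2 with hNdef
  set ε2 : ℝ≥0∞ := R.inf (fun z => X.P z {ω | ω (mz z) = ((0:ℕ), s0)}) with hε2def
  have hε2pos : 0 < ε2 := by
    rw [Finset.lt_inf_iff (by simp : (0:ℝ≥0∞) < ⊤)]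
    intro z hz
    exact pos_iff_ne_zero.2 (hmz2 z)
  set ε2c := min ε2 1 with hε2cdef
  have hε2cne : ε2c ≠ ⊤ := ne_top_of_le_ne_top ENNReal.one_ne_top (min_le_right _ _)
  have hε2cpos : 0 < ε2c := lt_min hε2pos one_pos
  set εr := min ((β/2)^N1) ε2c.toReal with hεrdef
  have hεrpos : 0 < εr := by
    refine lt_min (by positivity) ?_
    exact ENNReal.toReal_pos (ne_of_gt hε2cpos) hε2cne
  have hεr1 : εr ≤ 1 := by
    refine le_trans (min_le_left _ _) ?_
    exact pow_le_one₀ (by positivity) (by linarith)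
  refine ⟨N, εr, le_trans hN1 (le_max_left _ _), hεrpos, hεr1, ?_⟩
  rintro ⟨zx, zi⟩
  rcases Nat.lt_or_ge zx x2 with hzx | hzx
  · -- small region
    have hzR : ((zx, zi) : ℕ × S) ∈ R :=
      Finset.mem_product.2 ⟨Finset.mem_range.2 hzx, Finset.mem_univ _⟩
    have h1 : ε2 ≤ X.P (zx, zi) {ω | ω (mz (zx, zi)) = ((0:ℕ), s0)} := Finset.inf_le hzR
    have h2 : X.P (zx, zi) {ω | ω (mz (zx, zi)) = ((0:ℕ), s0)}
        ≤ X.P (zx, zi) (hitEv s0 N) := by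
      refine measure_mono fun ω hω => ?_
      refine ⟨mz (zx, zi), hmz1 _, le_trans (Finset.le_sup hzR) (le_max_right _ _), ?_⟩
      rw [Set.mem_setOf_eq] at hω
      rw [hω]
    calc ENNReal.ofReal εr ≤ ENNReal.ofReal ε2c.toReal :=
          ENNReal.ofReal_le_ofReal (min_le_right _ _)
      _ = ε2c := ENNReal.ofReal_toReal hε2cne
      _ ≤ ε2 := min_le_left _ _
      _ ≤ _ := le_trans h1 h2
  · -- large region
    have h1 := hlarge zx hzx zi
    calc ENNReal.ofReal εr ≤ ENNReal.ofReal ((β/2)^N1) :=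
          ENNReal.ofReal_le_ofReal (min_le_left _ _)
      _ ≤ X.P (zx, zi) (hitEv s0 N1) := h1
      _ ≤ X.P (zx, zi) (hitEv s0 N) := by
          refine measure_mono fun ω hω => ?_
          obtain ⟨k, hk1, hk2, hk3⟩ := hω
          exact ⟨k, hk1, le_trans hk2 (le_max_left _ _), hk3⟩

end Strip3



section Strip4

variable {S : Type*} [Fintype S] [DecidableEq S] [Nonempty S]
  [MeasurableSpace S] [MeasurableSingletonClass S]

/-- No visit to `s0` during `[1, m]`. -/
def noHitEv (s0 : S) (m : ℕ) : Set (ℕ → ℕ × S) :=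
  {ω | ∀ k, 1 ≤ k → k ≤ m → (ω k).2 ≠ s0}

lemma measurableSet_noHitEv (s0 : S) (m : ℕ) : MeasurableSet (noHitEv s0 m) := by
  refine measurableSet_cyl m _ ?_
  intro ω ω' hagree hω k h1 h2
  rw [← hagree k h2]
  exact hω k h1 h2

lemma noHitEv_compl (s0 : S) (m : ℕ) : noHitEv s0 m = (hitEv s0 m)ᶜ := by
  ext ω
  simp only [noHitEv, hitEv, Set.mem_compl_iff, Set.mem_setOf_eq, not_exists]
  constructor
  · rintro h k ⟨h1, h2, h3⟩
    exact h k h1 h2 h3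
  · intro h k h1 h2 h3
    exact h k ⟨h1, h2, h3⟩

lemma geom_tail (X : MChain (ℕ × S)) (s0 : S) (N : ℕ) (εr : ℝ) (hεr0 : 0 < εr) (hεr1 : εr ≤ 1)
    (hhit : ∀ z : ℕ × S, ENNReal.ofReal εr ≤ X.P z (hitEv s0 N)) :
    ∀ (z : ℕ × S) (j : ℕ), X.P z (noHitEv s0 (j * N)) ≤ ENNReal.ofReal ((1 - εr)^j) := by
  intro z j
  induction j generalizing z with
  | zero =>
      simp only [pow_zero, ENNReal.ofReal_one]
      exact X.prob_le_one z _
  | succ j ih =>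
      have hsplit : noHitEv s0 ((j+1) * N)
          = noHitEv s0 (j * N) ∩ {ω | (fun k => ω (j * N + k)) ∈ noHitEv s0 N} := by
        ext ω
        simp only [noHitEv, Set.mem_inter_iff, Set.mem_setOf_eq]
        constructor
        · intro h
          refine ⟨fun k h1 h2 => h k h1 (le_trans h2 (by nlinarith)), ?_⟩
          intro k h1 h2
          exact h (j * N + k) (le_trans h1 (Nat.le_add_left _ _)) (by nlinarith)
        · rintro ⟨h1, h2⟩ k hk1 hk2
          rcases Nat.lt_or_ge k (j * N + 1) with h | h
          · exact h1 k hk1 (by omega)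
          · have hk : k = j * N + (k - j * N) := by omega
            rw [hk]
            refine h2 (k - j * N) (by omega) (by
              have : (j+1) * N = j * N + N := by ring
              omega)
      rw [hsplit, X.decomp z (j * N) (noHitEv s0 N) (noHitEv s0 (j * N))
        (measurableSet_noHitEv s0 N) (measurableSet_noHitEv s0 (j * N))
        (fun ω ω' hagree hω k h1 h2 => by rw [← hagree k h2]; exact hω k h1 h2)]
      have hterm : ∀ w : ℕ × S,
          X.P z (noHitEv s0 (j * N) ∩ {ω | ω (j * N) = w}) * X.P w (noHitEv s0 N)
            ≤ X.P z (noHitEv s0 (j * N) ∩ {ω | ω (j * N) = w}) * ENNReal.ofReal (1 - εr) := by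
        intro w
        refine mul_le_mul_right ?_ _
        rw [noHitEv_compl, measure_compl (measurableSet_hitEv s0 N) (X.meas_ne_top _ _)]
        have h1 : (X.P w) Set.univ = 1 := by
          have := X.isProb w; exact measure_univ
        rw [h1]
        calc 1 - X.P w (hitEv s0 N) ≤ 1 - ENNReal.ofReal εr := tsub_le_tsub_left (hhit w) 1
          _ = ENNReal.ofReal 1 - ENNReal.ofReal εr := by rw [ENNReal.ofReal_one]
          _ = ENNReal.ofReal (1 - εr) := (ENNReal.ofReal_sub 1 (le_of_lt hεr0)).symm
      calc ∑' w : ℕ × S, X.P z (noHitEv s0 (j * N) ∩ {ω | ω (j * N) = w}) * X.P w (noHitEv s0 N)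
          ≤ ∑' w : ℕ × S, X.P z (noHitEv s0 (j * N) ∩ {ω | ω (j * N) = w})
              * ENNReal.ofReal (1 - εr) := ENNReal.tsum_le_tsum hterm
        _ = (∑' w : ℕ × S, X.P z (noHitEv s0 (j * N) ∩ {ω | ω (j * N) = w}))
              * ENNReal.ofReal (1 - εr) := ENNReal.tsum_mul_right
        _ = X.P z (noHitEv s0 (j * N)) * ENNReal.ofReal (1 - εr) := by
              rw [← X.decomp_univ z (j * N) _ (measurableSet_noHitEv s0 (j * N))]
        _ ≤ ENNReal.ofReal ((1 - εr)^j) * ENNReal.ofReal (1 - εr) :=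
              mul_le_mul_left (ih z) _
        _ = ENNReal.ofReal ((1 - εr)^(j+1)) := by
              rw [← ENNReal.ofReal_mul (pow_nonneg (by linarith) j), ← pow_succ]

lemma geom_tail' (X : MChain (ℕ × S)) (s0 : S) (N : ℕ) (hN : 1 ≤ N) (εr : ℝ)
    (hεr0 : 0 < εr) (hεr1 : εr ≤ 1)
    (hhit : ∀ z : ℕ × S, ENNReal.ofReal εr ≤ X.P z (hitEv s0 N)) :
    ∀ (z : ℕ × S) (t : ℕ), X.P z (noHitEv s0 t) ≤ ENNReal.ofReal ((1 - εr)^(t / N)) := by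
  intro z t
  have hsub : noHitEv s0 t ⊆ noHitEv s0 ((t / N) * N) := by
    intro ω hω k h1 h2
    exact hω k h1 (le_trans h2 (Nat.div_mul_le_self t N))
  exact le_trans (measure_mono hsub) (geom_tail X s0 N εr hεr0 hεr1 hhit z _)

/-- Almost surely, the `S`-coordinate visits `s0` at arbitrarily large times. -/
lemma no_visit_after_null (X : MChain (ℕ × S)) (s0 : S) (N : ℕ) (hN : 1 ≤ N) (εr : ℝ)
    (hεr0 : 0 < εr) (hεr1 : εr ≤ 1)
    (hhit : ∀ z : ℕ × S, ENNReal.ofReal εr ≤ X.P z (hitEv s0 N)) :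
    ∀ (z : ℕ × S) (m : ℕ), X.P z {ω | ∀ k, m ≤ k → (ω k).2 ≠ s0} = 0 := by
  intro z m
  set E : Set (ℕ → ℕ × S) := {ω | ∀ k, m ≤ k → (ω k).2 ≠ s0} with hE
  have hEmeas : MeasurableSet E := by
    have : E = ⋂ k ∈ {k : ℕ | m ≤ k}, {ω : ℕ → ℕ × S | (ω k).2 ≠ s0} := by
      ext ω; simp [hE, Set.mem_iInter]
    rw [this]
    refine MeasurableSet.biInter (Set.to_countable _) fun k _ => ?_
    have : {ω : ℕ → ℕ × S | (ω k).2 ≠ s0} = ((fun ω : ℕ → ℕ × S => (ω k).2) ⁻¹' {s0})ᶜ := by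
      ext ω; simp
    rw [this]
    exact (((measurable_pi_apply k).snd) (measurableSet_singleton s0)).compl
  have hbound : ∀ j : ℕ, X.P z E ≤ ENNReal.ofReal ((1 - εr)^j) := by
    intro j
    have hsub : E ⊆ Set.univ ∩ {ω | (fun k => ω (m + k)) ∈ noHitEv s0 (j * N)} := by
      intro ω hω
      refine ⟨Set.mem_univ _, ?_⟩
      intro k h1 h2
      exact hω (m + k) (Nat.le_add_right _ _)
    refine le_trans (measure_mono hsub) ?_
    rw [X.decomp z m (noHitEv s0 (j * N)) Set.univ (measurableSet_noHitEv s0 _)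
      MeasurableSet.univ (fun _ _ _ h => h)]
    calc ∑' w : ℕ × S, X.P z (Set.univ ∩ {ω | ω m = w}) * X.P w (noHitEv s0 (j * N))
        ≤ ∑' w : ℕ × S, X.P z (Set.univ ∩ {ω | ω m = w}) * ENNReal.ofReal ((1 - εr)^j) :=
          ENNReal.tsum_le_tsum fun w =>
            mul_le_mul_right (geom_tail X s0 N εr hεr0 hεr1 hhit w j) _
      _ = (∑' w : ℕ × S, X.P z (Set.univ ∩ {ω | ω m = w})) * ENNReal.ofReal ((1 - εr)^j) :=
          ENNReal.tsum_mul_right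
      _ = X.P z Set.univ * ENNReal.ofReal ((1 - εr)^j) := by
          rw [← X.decomp_univ z m Set.univ MeasurableSet.univ]
      _ ≤ 1 * ENNReal.ofReal ((1 - εr)^j) := mul_le_mul_left (X.prob_le_one z _) _
      _ = ENNReal.ofReal ((1 - εr)^j) := one_mul _
  have htend : Tendsto (fun j : ℕ => ENNReal.ofReal ((1 - εr)^j)) atTop (nhds 0) := by
    have h1 : Tendsto (fun j : ℕ => (1 - εr)^j) atTop (nhds 0) :=
      tendsto_pow_atTop_nhds_zero_of_abs_lt_one (by rw [abs_lt]; constructor <;> linarith)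
    have h2 := (ENNReal.continuous_ofReal.tendsto 0).comp h1
    simpa [Function.comp_def] using h2
  have := ge_of_tendsto htend (Filter.Eventually.of_forall hbound)
  exact le_antisymm this zero_le

lemma bad_null (X : MChain (ℕ × S)) (s0 : S) (N : ℕ) (hN : 1 ≤ N) (εr : ℝ)
    (hεr0 : 0 < εr) (hεr1 : εr ≤ 1)
    (hhit : ∀ z : ℕ × S, ENNReal.ofReal εr ≤ X.P z (hitEv s0 N)) (z : ℕ × S) :
    X.P z {ω | ¬ ({k : ℕ | (ω k).2 = s0}.Infinite)} = 0 := by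
  have hsub : {ω : ℕ → ℕ × S | ¬ ({k : ℕ | (ω k).2 = s0}.Infinite)}
      ⊆ ⋃ m : ℕ, {ω | ∀ k, m ≤ k → (ω k).2 ≠ s0} := by
    intro ω hω
    simp only [Set.mem_setOf_eq] at hω
    rw [Set.not_infinite] at hω
    rcases hω.bddAbove with ⟨m, hm⟩
    refine Set.mem_iUnion.2 ⟨m + 1, fun k hk hvis => ?_⟩
    have := hm hvis
    omega
  refine measure_mono_null hsub ?_
  exact measure_iUnion_null fun m => no_visit_after_null X s0 N hN εr hεr0 hεr1 hhit z m

/-- Union bound for one big jump among the first `L` steps. -/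
lemma max_jump_bound (X : MChain (ℕ × S)) (p : ℝ) (hp : 0 < p) (C : ℝ≥0∞)
    (hC : ∀ (x : ℕ) (i : S),
      (∫⁻ ω, ENNReal.ofReal (|((ω 1).1 : ℝ) - (x : ℝ)| ^ p) ∂(X.P (x, i))) ≤ C)
    (z : ℕ × S) (L : ℕ) (m : ℝ) (hm : 0 < m) :
    X.P z {ω | ∃ k, k < L ∧ m ≤ |((ω (k+1)).1 : ℝ) - ((ω k).1 : ℝ)|}
      ≤ L * (C / ENNReal.ofReal (m^p)) := by
  set A : Set (ℕ → ℕ × S) := {ω | m ≤ |((ω 1).1 : ℝ) - ((ω 0).1 : ℝ)|} with hA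
  have hAmeas : MeasurableSet A := by
    refine measurableSet_cyl 1 _ ?_
    intro ω ω' hagree hω
    rw [Set.mem_setOf_eq, ← hagree 1 le_rfl, ← hagree 0 (Nat.zero_le 1)]
    exact hω
  have hsingle : ∀ w : ℕ × S, X.P w A ≤ C / ENNReal.ofReal (m^p) := by
    intro w
    rw [← X.meas_inter_init w A]
    refine le_trans (measure_mono ?_) (jump_tail X p hp C hC w m hm)
    rintro ω ⟨h1, h2⟩
    rw [Set.mem_setOf_eq] at h1 h2 ⊢
    rw [h2] at h1
    exact h1
  have hstep : ∀ k : ℕ, X.P z {ω | m ≤ |((ω (k+1)).1 : ℝ) - ((ω k).1 : ℝ)|}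
      ≤ C / ENNReal.ofReal (m^p) := by
    intro k
    have heq : {ω : ℕ → ℕ × S | m ≤ |((ω (k+1)).1 : ℝ) - ((ω k).1 : ℝ)|}
        = Set.univ ∩ {ω | (fun t => ω (k + t)) ∈ A} := by
      ext ω
      simp only [Set.mem_inter_iff, Set.mem_univ, true_and, hA, Set.mem_setOf_eq, Nat.add_zero]
    rw [heq, X.decomp z k A Set.univ hAmeas MeasurableSet.univ (fun _ _ _ h => h)]
    calc ∑' w : ℕ × S, X.P z (Set.univ ∩ {ω | ω k = w}) * X.P w A
        ≤ ∑' w : ℕ × S, X.P z (Set.univ ∩ {ω | ω k = w}) * (C / ENNReal.ofReal (m^p)) :=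
          ENNReal.tsum_le_tsum fun w => mul_le_mul_right (hsingle w) _
      _ = (∑' w : ℕ × S, X.P z (Set.univ ∩ {ω | ω k = w})) * (C / ENNReal.ofReal (m^p)) :=
          ENNReal.tsum_mul_right
      _ = X.P z Set.univ * (C / ENNReal.ofReal (m^p)) := by
          rw [← X.decomp_univ z k Set.univ MeasurableSet.univ]
      _ ≤ 1 * (C / ENNReal.ofReal (m^p)) := mul_le_mul_left (X.prob_le_one z _) _
      _ = C / ENNReal.ofReal (m^p) := one_mul _
  have hcover : {ω : ℕ → ℕ × S | ∃ k, k < L ∧ m ≤ |((ω (k+1)).1 : ℝ) - ((ω k).1 : ℝ)|}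
      ⊆ ⋃ k ∈ Finset.range L, {ω : ℕ → ℕ × S | m ≤ |((ω (k+1)).1 : ℝ) - ((ω k).1 : ℝ)|} := by
    rintro ω ⟨k, hk1, hk2⟩
    exact Set.mem_biUnion (Finset.mem_range.2 hk1) hk2
  refine le_trans (measure_mono hcover) ?_
  refine le_trans (measure_biUnion_finset_le _ _) ?_
  calc ∑ k ∈ Finset.range L, X.P z {ω | m ≤ |((ω (k+1)).1 : ℝ) - ((ω k).1 : ℝ)|}
      ≤ ∑ k ∈ Finset.range L, (C / ENNReal.ofReal (m^p)) :=
        Finset.sum_le_sum fun k _ => hstep k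
    _ = L * (C / ENNReal.ofReal (m^p)) := by
        rw [Finset.sum_const, Finset.card_range, nsmul_eq_mul]

/-- Deterministic: displacement is at most (number of steps) × (max jump). -/
lemma disp_le (ω : ℕ → ℕ × S) (L : ℕ) (m : ℝ) (hm : 0 ≤ m)
    (hjump : ∀ t, t < L → |((ω (t+1)).1 : ℝ) - ((ω t).1 : ℝ)| ≤ m) :
    ∀ k, k ≤ L → |((ω k).1 : ℝ) - ((ω 0).1 : ℝ)| ≤ L * m := by
  have hstep : ∀ k, k ≤ L → |((ω k).1 : ℝ) - ((ω 0).1 : ℝ)| ≤ k * m := by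
    intro k
    induction k with
    | zero => intro _; simp
    | succ k ih =>
        intro hk
        have h1 := ih (le_trans (Nat.le_succ k) hk)
        have h2 := hjump k (by omega)
        calc |((ω (k+1)).1 : ℝ) - ((ω 0).1 : ℝ)|
            ≤ |((ω (k+1)).1 : ℝ) - ((ω k).1 : ℝ)| + |((ω k).1 : ℝ) - ((ω 0).1 : ℝ)| := by
              exact abs_sub_le _ _ _
          _ ≤ m + k * m := add_le_add h2 h1
          _ = ((k+1 : ℕ) : ℝ) * m := by push_cast; ring
  intro k hk
  refine le_trans (hstep k hk) ?_
  have : (k:ℝ) ≤ L := by exact_mod_cast hk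
  nlinarith

end Strip4

set_option maxHeartbeats 1000000


section Strip5

variable {S : Type*} [Fintype S] [DecidableEq S] [Nonempty S]
  [MeasurableSpace S] [MeasurableSingletonClass S]

/-- Maximal displacement of the first coordinate up to the first return of `η` to `s0`. -/
noncomputable def D0 (s0 : S) (ω : ℕ → ℕ × S) : ℕ :=
  Finset.sup (Finset.Icc 0 (tauRet s0 ω)) fun k => Nat.dist (ω k).1 (ω 0).1

lemma log_rpow_bound (δ : ℝ) (hδ : 0 < δ) :
    ∃ c3 : ℝ, 0 < c3 ∧ ∀ d : ℕ, 1 ≤ d → ((Nat.log 2 d : ℝ) + 1) ≤ c3 * (d:ℝ)^δ := by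
  have hlog2 : (0:ℝ) < Real.log 2 := Real.log_pos (by norm_num)
  refine ⟨1/(δ * Real.log 2) + 1, by positivity, ?_⟩
  intro d hd
  have hd0 : (0:ℝ) < (d:ℝ) := by exact_mod_cast hd
  have hd1 : (1:ℝ) ≤ (d:ℝ) := by exact_mod_cast hd
  have hlog : (Nat.log 2 d : ℝ) * Real.log 2 ≤ Real.log d := by
    have h2 : ((2:ℝ))^(Nat.log 2 d) ≤ (d:ℝ) := by
      exact_mod_cast Nat.pow_log_le_self 2 (by omega)
    have h3 := Real.log_le_log (by positivity) h2
    rwa [Real.log_pow] at h3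
  have hlogd : Real.log d ≤ (d:ℝ)^δ / δ := Real.log_le_rpow_div hd0.le hδ
  have hdpow : (1:ℝ) ≤ (d:ℝ)^δ := by
    have := Real.rpow_le_rpow (by norm_num : (0:ℝ) ≤ 1) hd1 hδ.le
    rwa [Real.one_rpow] at this
  have h4 : (Nat.log 2 d : ℝ) ≤ (d:ℝ)^δ / (δ * Real.log 2) := by
    rw [le_div_iff₀ (by positivity)]
    calc (Nat.log 2 d : ℝ) * (δ * Real.log 2) = ((Nat.log 2 d : ℝ) * Real.log 2) * δ := by ring
      _ ≤ Real.log d * δ := by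
          have h5 : (0:ℝ) ≤ δ := hδ.le
          nlinarith
      _ ≤ ((d:ℝ)^δ / δ) * δ := by nlinarith
      _ = (d:ℝ)^δ := by field_simp
  have h6 : (d:ℝ)^δ / (δ * Real.log 2) = (1/(δ * Real.log 2)) * (d:ℝ)^δ := by ring
  rw [h6] at h4
  have h7 : (1:ℝ) * 1 ≤ 1 * (d:ℝ)^δ := by nlinarith
  calc (Nat.log 2 d : ℝ) + 1 ≤ (1/(δ * Real.log 2)) * (d:ℝ)^δ + 1 * (d:ℝ)^δ := by
        refine add_le_add h4 ?_; linarith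
    _ = (1/(δ * Real.log 2) + 1) * (d:ℝ)^δ := by ring

theorem D0_tail (X : MChain (ℕ × S)) (s0 : S) (p : ℝ) (hp : 1 < p) (C : ℝ≥0∞) (hCne : C ≠ ⊤)
    (hC : ∀ (x : ℕ) (i : S),
      (∫⁻ ω, ENNReal.ofReal (|((ω 1).1 : ℝ) - (x : ℝ)| ^ p) ∂(X.P (x, i))) ≤ C)
    (N : ℕ) (hN : 1 ≤ N) (εr : ℝ) (hεr0 : 0 < εr) (hεr1 : εr ≤ 1)
    (hhit : ∀ z : ℕ × S, ENNReal.ofReal εr ≤ X.P z (hitEv s0 N))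
    (r : ℝ) (hr0 : 0 < r) (hrp : r < p) :
    ∃ Cr : ℝ, 0 < Cr ∧ ∀ (z : ℕ × S) (d : ℕ), 1 ≤ d →
      X.P z {ω | d ≤ D0 s0 ω} ≤ ENNReal.ofReal (Cr * (d:ℝ)^(-r)) := by
  classical
  set mint : ℕ := ⌈r⌉₊ + 1 with hmintdef
  obtain ⟨K, hK⟩ := exists_pow_lt_of_lt_one (show (0:ℝ) < (1/2)^mint by positivity)
    (show 1 - εr < 1 by linarith)
  set δ : ℝ := (p - r)/(p+1) with hδdef
  have hδpos : 0 < δ := by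
    rw [hδdef]
    have h1 : 0 < p - r := by linarith
    have h2 : 0 < p + 1 := by linarith
    positivity
  obtain ⟨c3, hc3, hlogb⟩ := log_rpow_bound δ hδpos
  set CBr := C.toReal with hCBrdef
  have hCBr : 0 ≤ CBr := ENNReal.toReal_nonneg
  set c4 : ℝ := ((N*K : ℕ) + 1 : ℝ) * c3 with hc4def
  have hc4 : 0 < c4 := by positivity
  set Cr : ℝ := 1 + CBr * c4^(p+1) with hCrdef
  have hCrpos : 0 < Cr := by positivity
  refine ⟨Cr, hCrpos, ?_⟩
  intro z d hd
  have hd0 : (0:ℝ) < (d:ℝ) := by exact_mod_cast hd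
  have hd1 : (1:ℝ) ≤ (d:ℝ) := by exact_mod_cast hd
  set l : ℕ := Nat.log 2 d with hldef
  set L : ℕ := N * (K * (l + 1)) with hLdef
  have hK1 : 1 ≤ K := by
    by_contra hK0
    push_neg at hK0
    interval_cases K
    simp only [pow_zero] at hK
    have : ((1:ℝ)/2)^mint ≤ 1 := pow_le_one₀ (by norm_num) (by norm_num)
    linarith
  have hL1 : 1 ≤ L := by
    have : 1 * (1 * 1) ≤ N * (K * (l + 1)) :=
      Nat.mul_le_mul hN (Nat.mul_le_mul hK1 (by omega))
    omega
  -- inclusion of the event into (no hit before L) ∪ (some big jump before L)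
  have hincl : {ω : ℕ → ℕ × S | d ≤ D0 s0 ω} ⊆ noHitEv s0 L ∪
      {ω | ∃ k, k < L ∧ (d:ℝ)/(L+1) ≤ |((ω (k+1)).1 : ℝ) - ((ω k).1 : ℝ)|} := by
    intro ω hω
    by_cases hhitL : ω ∈ noHitEv s0 L
    · exact Or.inl hhitL
    · refine Or.inr ?_
      by_contra hno
      simp only [Set.mem_setOf_eq] at hno
      push_neg at hno
      rw [noHitEv_compl, Set.mem_compl_iff, not_not] at hhitL
      obtain ⟨t, ht1, ht2, ht3⟩ := hhitL
      have hτ : tauRet s0 ω ≤ L := le_trans (Nat.sInf_le ⟨ht1, ht3⟩) ht2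
      have hex : ∃ k ∈ Finset.Icc 0 (tauRet s0 ω), d ≤ Nat.dist (ω k).1 (ω 0).1 :=
        (Finset.le_sup_iff (show (⊥:ℕ) < d from hd)).1 hω
      obtain ⟨k, hkmem, hkd⟩ := hex
      have hkL : k ≤ L := le_trans (Finset.mem_Icc.1 hkmem).2 hτ
      have hdisp := disp_le (S := S) ω L ((d:ℝ)/(L+1)) (by positivity)
        (fun t' ht' => le_of_lt (hno t' ht')) k hkL
      have hcast : ((Nat.dist (ω k).1 (ω 0).1 : ℕ) : ℝ) = |((ω k).1 : ℝ) - ((ω 0).1 : ℝ)| := by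
        rcases le_total (ω k).1 (ω 0).1 with h | h
        · have hr : ((ω k).1 : ℝ) ≤ ((ω 0).1 : ℝ) := by exact_mod_cast h
          rw [Nat.dist_eq_sub_of_le h, Nat.cast_sub h, abs_of_nonpos (by linarith), neg_sub]
        · have hr : ((ω 0).1 : ℝ) ≤ ((ω k).1 : ℝ) := by exact_mod_cast h
          rw [Nat.dist_comm, Nat.dist_eq_sub_of_le h, Nat.cast_sub h,
            abs_of_nonneg (by linarith)]
      have hd' : (d:ℝ) ≤ (L:ℝ) * ((d:ℝ)/(L+1)) := by
        refine le_trans ?_ hdisp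
        rw [← hcast]
        exact_mod_cast hkd
      have hfin : (L:ℝ) * ((d:ℝ)/(L+1)) < d := by
        rw [mul_div_assoc', div_lt_iff₀ (by positivity)]
        nlinarith
      linarith
  refine le_trans (measure_mono hincl) (le_trans (measure_union_le _ _) ?_)
  have h0le : (0:ℝ) ≤ 1 - εr := by linarith
  -- Term 1 : геометрический
  have hT1 : X.P z (noHitEv s0 L) ≤ ENNReal.ofReal ((d:ℝ)^(-r)) := by
    have hg := geom_tail' X s0 N hN εr hεr0 hεr1 hhit z L
    have hLN : L / N = K * (l+1) := by
      rw [hLdef]; exact Nat.mul_div_cancel_left _ (by omega)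
    rw [hLN] at hg
    refine le_trans hg (ENNReal.ofReal_le_ofReal ?_)
    have e1 : (1-εr)^(K*(l+1)) = ((1-εr)^K)^(l+1) := by rw [pow_mul]
    have e2 : ((1-εr)^K)^(l+1) ≤ (((1:ℝ)/2)^mint)^(l+1) :=
      pow_le_pow_left₀ (pow_nonneg h0le K) (le_of_lt hK) _
    have e3 : (((1:ℝ)/2)^mint)^(l+1) = (((1:ℝ)/2)^(l+1))^mint := by
      rw [← pow_mul, mul_comm, pow_mul]
    have hdlt : (d:ℝ) < 2^(l+1) := by
      exact_mod_cast Nat.lt_pow_succ_log_self (by norm_num) d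
    have e4 : ((1:ℝ)/2)^(l+1) ≤ 1/(d:ℝ) := by
      rw [one_div, one_div, inv_pow]
      exact inv_anti₀ hd0 (le_of_lt hdlt)
    have e5 : (((1:ℝ)/2)^(l+1))^mint ≤ ((1:ℝ)/(d:ℝ))^mint :=
      pow_le_pow_left₀ (by positivity) e4 _
    have e6 : ((1:ℝ)/(d:ℝ))^mint = (d:ℝ)^(-(mint:ℝ)) := by
      rw [one_div, inv_pow, Real.rpow_neg hd0.le, Real.rpow_natCast]
    have e7 : (d:ℝ)^(-(mint:ℝ)) ≤ (d:ℝ)^(-r) := by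
      refine Real.rpow_le_rpow_of_exponent_le hd1 ?_
      have : r ≤ (mint:ℝ) := by
        refine le_trans (Nat.le_ceil r) ?_
        exact_mod_cast Nat.le_succ _
      linarith
    calc (1-εr)^(K*(l+1)) = ((1-εr)^K)^(l+1) := e1
      _ ≤ (((1:ℝ)/2)^mint)^(l+1) := e2
      _ = (((1:ℝ)/2)^(l+1))^mint := e3
      _ ≤ ((1:ℝ)/(d:ℝ))^mint := e5
      _ = (d:ℝ)^(-(mint:ℝ)) := e6
      _ ≤ (d:ℝ)^(-r) := e7
  -- Term 2 : big jump
  have hT2 : X.P z {ω | ∃ k, k < L ∧ (d:ℝ)/(L+1) ≤ |((ω (k+1)).1 : ℝ) - ((ω k).1 : ℝ)|}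
      ≤ ENNReal.ofReal ((CBr * c4^(p+1)) * (d:ℝ)^(-r)) := by
    have hm : (0:ℝ) < (d:ℝ)/(L+1) := by positivity
    have hjb := max_jump_bound X p (lt_trans one_pos hp) C hC z L ((d:ℝ)/(L+1)) hm
    refine le_trans hjb ?_
    have hCof : C = ENNReal.ofReal CBr := (ENNReal.ofReal_toReal hCne).symm
    have hdiv : C / ENNReal.ofReal (((d:ℝ)/(L+1))^p)
        = ENNReal.ofReal (CBr / ((d:ℝ)/(L+1))^p) := by
      rw [hCof, ← ENNReal.ofReal_div_of_pos (Real.rpow_pos_of_pos hm p)]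
    rw [hdiv]
    have hLcast : (L : ℝ≥0∞) = ENNReal.ofReal (L:ℝ) := by
      rw [ENNReal.ofReal_natCast]
    rw [hLcast, ← ENNReal.ofReal_mul (by positivity)]
    refine ENNReal.ofReal_le_ofReal ?_
    -- now a real inequality
    have hrw : ((d:ℝ)/(L+1))^p = (d:ℝ)^p / ((L:ℝ)+1)^p := by
      rw [Real.div_rpow hd0.le (by positivity)]
    rw [hrw]
    have hLp : (0:ℝ) < ((L:ℝ)+1)^p := Real.rpow_pos_of_pos (by positivity) p
    have hdp : (0:ℝ) < (d:ℝ)^p := Real.rpow_pos_of_pos hd0 p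
    have hlhs : (L:ℝ) * (CBr / ((d:ℝ)^p / ((L:ℝ)+1)^p))
        = (L:ℝ) * CBr * ((L:ℝ)+1)^p / (d:ℝ)^p := by
      field_simp
    rw [hlhs]
    have hA0 : ((L:ℝ)+1) ≤ c4 * (d:ℝ)^δ := by
      have hb1 : ((L:ℝ)+1) ≤ ((N*K:ℕ) + 1 : ℝ) * ((l:ℝ)+1) := by
        have hLr : (L:ℝ) = (N:ℝ) * ((K:ℝ) * ((l:ℝ)+1)) := by rw [hLdef]; push_cast; ring
        rw [hLr]
        push_cast
        nlinarith [Nat.cast_nonneg (α := ℝ) l]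
      refine le_trans hb1 ?_
      rw [hc4def, mul_assoc]
      refine mul_le_mul_of_nonneg_left ?_ (by positivity)
      exact hlogb d hd
    have hA1 : (L:ℝ) * ((L:ℝ)+1)^p ≤ ((L:ℝ)+1)^(p+1) := by
      rw [Real.rpow_add (by positivity) p 1, Real.rpow_one]
      nlinarith [hLp]
    have hA2 : ((L:ℝ)+1)^(p+1) ≤ (c4 * (d:ℝ)^δ)^(p+1) :=
      Real.rpow_le_rpow (by positivity) hA0 (by linarith)
    have hA3 : (c4 * (d:ℝ)^δ)^(p+1) = c4^(p+1) * (d:ℝ)^(p-r) := by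
      rw [Real.mul_rpow hc4.le (Real.rpow_nonneg hd0.le δ),
        ← Real.rpow_mul hd0.le]
      congr 1
      rw [hδdef]
      field_simp
    have hA4 : (d:ℝ)^(p-r) = (d:ℝ)^p * (d:ℝ)^(-r) := by
      rw [← Real.rpow_add hd0]
      congr 1 <;> ring
    rw [div_le_iff₀ hdp]
    calc (L:ℝ) * CBr * ((L:ℝ)+1)^p = CBr * ((L:ℝ) * ((L:ℝ)+1)^p) := by ring
      _ ≤ CBr * ((L:ℝ)+1)^(p+1) := mul_le_mul_of_nonneg_left hA1 hCBr
      _ ≤ CBr * (c4^(p+1) * (d:ℝ)^(p-r)) := by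
          refine mul_le_mul_of_nonneg_left (le_trans hA2 (le_of_eq hA3)) hCBr
      _ = CBr * c4^(p+1) * (d:ℝ)^(-r) * (d:ℝ)^p := by
          rw [hA4]; ring
  refine le_trans (add_le_add hT1 hT2) ?_
  rw [← ENNReal.ofReal_add (by positivity) (by positivity)]
  refine ENNReal.ofReal_le_ofReal (le_of_eq ?_)
  rw [hCrdef]
  ring

end Strip5





section Strip6

variable {S : Type*} [Fintype S] [DecidableEq S] [Nonempty S]
  [MeasurableSpace S] [MeasurableSingletonClass S] (s0 : S)

/-- The event: the `(n+1)`-st visit of `η` to `s0` happens at time `m`. -/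
def Hset (n m : ℕ) : Set (ℕ → ℕ × S) :=
  {ω | (ω m).2 = s0 ∧ ((Finset.range m).filter (fun k => (ω k).2 = s0)).card = n}

lemma measurableSet_Hset (n m : ℕ) : MeasurableSet (Hset s0 n m) := by
  refine measurableSet_cyl m _ ?_
  rintro ω ω' hagree ⟨h1, h2⟩
  constructor
  · rw [← hagree m le_rfl]; exact h1
  · rw [← h2]
    congr 1
    refine Finset.filter_congr ?_
    intro k hk
    rw [Finset.mem_range] at hk
    rw [hagree k (by omega)]

lemma tauSeq_eq_of_Hset (n m : ℕ) (ω : ℕ → ℕ × S) (hω : ω ∈ Hset s0 n m) :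
    tauSeq s0 ω n = m := by
  induction n generalizing m with
  | zero =>
      obtain ⟨h1, h2⟩ := hω
      rw [Finset.card_eq_zero] at h2
      have hno : ∀ k, k < m → ¬ ((ω k).2 = s0) := by
        intro k hk hvis
        have hmem : k ∈ (Finset.range m).filter (fun k => (ω k).2 = s0) :=
          Finset.mem_filter.2 ⟨Finset.mem_range.2 hk, hvis⟩
        rw [h2] at hmem
        exact absurd hmem (Finset.notMem_empty k)
      show sInf {k | (ω k).2 = s0} = m
      refine le_antisymm (Nat.sInf_le h1) ?_
      by_contra hlt
      push_neg at hlt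
      exact hno _ hlt (Nat.sInf_mem (⟨m, h1⟩ : Set.Nonempty {k | (ω k).2 = s0}))
  | succ n ih =>
      obtain ⟨h1, h2⟩ := hω
      set F := (Finset.range m).filter (fun k => (ω k).2 = s0) with hF
      have hFne : F.Nonempty := Finset.card_pos.1 (by rw [h2]; omega)
      set m' := F.max' hFne with hm'
      have hm'F : m' ∈ F := F.max'_mem hFne
      have hm'lt : m' < m := Finset.mem_range.1 (Finset.mem_filter.1 hm'F).1
      have hm'vis : (ω m').2 = s0 := (Finset.mem_filter.1 hm'F).2
      have hF' : (Finset.range m').filter (fun k => (ω k).2 = s0) = F.erase m' := by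
        ext k
        constructor
        · intro hk
          obtain ⟨hk1, hk2⟩ := Finset.mem_filter.1 hk
          rw [Finset.mem_range] at hk1
          refine Finset.mem_erase.2 ⟨by omega, ?_⟩
          exact Finset.mem_filter.2 ⟨Finset.mem_range.2 (by omega), hk2⟩
        · intro hk
          obtain ⟨hne, hkF⟩ := Finset.mem_erase.1 hk
          obtain ⟨hk1, hk2⟩ := Finset.mem_filter.1 hkF
          have hle := F.le_max' k hkF
          refine Finset.mem_filter.2 ⟨Finset.mem_range.2 (by omega), hk2⟩
      have hcard' : ((Finset.range m').filter (fun k => (ω k).2 = s0)).card = n := by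
        rw [hF', Finset.card_erase_of_mem hm'F, h2]
        omega
      have hih := ih m' ⟨hm'vis, hcard'⟩
      show sInf {k | tauSeq s0 ω n < k ∧ (ω k).2 = s0} = m
      rw [hih]
      have hmm : m ∈ {k | m' < k ∧ (ω k).2 = s0} := ⟨hm'lt, h1⟩
      refine le_antisymm (Nat.sInf_le hmm) ?_
      by_contra hlt
      push_neg at hlt
      obtain ⟨ha, hb⟩ := Nat.sInf_mem (⟨m, hmm⟩ : Set.Nonempty {k | m' < k ∧ (ω k).2 = s0})
      have hmemF : sInf {k | m' < k ∧ (ω k).2 = s0} ∈ F :=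
        Finset.mem_filter.2 ⟨Finset.mem_range.2 hlt, hb⟩
      have := F.le_max' _ hmemF
      omega

lemma Hset_of_infinite (ω : ℕ → ℕ × S) (hinf : {k | (ω k).2 = s0}.Infinite) (n : ℕ) :
    ω ∈ Hset s0 n (tauSeq s0 ω n) := by
  induction n with
  | zero =>
      have hne : {k | (ω k).2 = s0}.Nonempty := hinf.nonempty
      have hmem := Nat.sInf_mem hne
      refine ⟨hmem, ?_⟩
      rw [Finset.card_eq_zero, Finset.filter_eq_empty_iff]
      intro k hk
      rw [Finset.mem_range] at hk
      intro hvis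
      have := Nat.sInf_le (show k ∈ {k | (ω k).2 = s0} from hvis)
      have hk' : k < sInf {k | (ω k).2 = s0} := hk
      omega
  | succ n ih =>
      obtain ⟨h1, h2⟩ := ih
      have hne : {k | tauSeq s0 ω n < k ∧ (ω k).2 = s0}.Nonempty := by
        obtain ⟨k, hk1, hk2⟩ := hinf.exists_gt (tauSeq s0 ω n)
        exact ⟨k, hk2, hk1⟩
      obtain ⟨hgt, hvis⟩ := Nat.sInf_mem hne
      refine ⟨hvis, ?_⟩
      have hset : (Finset.range (tauSeq s0 ω (n+1))).filter (fun k => (ω k).2 = s0)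
          = insert (tauSeq s0 ω n)
              ((Finset.range (tauSeq s0 ω n)).filter (fun k => (ω k).2 = s0)) := by
        ext k
        simp only [Finset.mem_filter, Finset.mem_range, Finset.mem_insert]
        constructor
        · rintro ⟨hk1, hk2⟩
          rcases lt_trichotomy k (tauSeq s0 ω n) with h | h | h
          · exact Or.inr ⟨h, hk2⟩
          · exact Or.inl h
          · exfalso
            have hin : tauSeq s0 ω (n+1) ≤ k := Nat.sInf_le ⟨h, hk2⟩
            have : k < tauSeq s0 ω (n+1) := hk1
            omega
        · rintro (rfl | ⟨hk1, hk2⟩)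
          · exact ⟨hgt, h1⟩
          · refine ⟨?_, hk2⟩
            have : tauSeq s0 ω n < tauSeq s0 ω (n+1) := hgt
            omega
      rw [hset, Finset.card_insert_of_notMem ?_, h2]
      simp only [Finset.mem_filter, Finset.mem_range]
      rintro ⟨hc, _⟩
      omega

lemma Dexc_shift (n m : ℕ) (ω : ℕ → ℕ × S) (hτ : tauSeq s0 ω n = m) :
    Dexc s0 n ω = D0 s0 (fun k => ω (m + k)) := by
  classical
  have hTdef : tauRet s0 (fun k => ω (m + k))
      = sInf {j | 1 ≤ j ∧ (ω (m + j)).2 = s0} := rfl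
  by_cases hne : {j : ℕ | 1 ≤ j ∧ (ω (m + j)).2 = s0}.Nonempty
  · -- there is a next visit
    set T := tauRet s0 (fun k => ω (m + k)) with hT
    obtain ⟨hT1, hTvis⟩ := Nat.sInf_mem hne
    have hτ1 : tauSeq s0 ω (n+1) = m + T := by
      show sInf {k | tauSeq s0 ω n < k ∧ (ω k).2 = s0} = m + T
      rw [hτ]
      have hmem : m + T ∈ {k | m < k ∧ (ω k).2 = s0} := by
        refine ⟨by omega, hTvis⟩
      refine le_antisymm (Nat.sInf_le hmem) ?_
      obtain ⟨hg, hv⟩ := Nat.sInf_mem (⟨m + T, hmem⟩ :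
        Set.Nonempty {k | m < k ∧ (ω k).2 = s0})
      set s := sInf {k | m < k ∧ (ω k).2 = s0}
      have hjmem : s - m ∈ {j | 1 ≤ j ∧ (ω (m + j)).2 = s0} := by
        constructor
        · omega
        · have : m + (s - m) = s := by omega
          rw [this]; exact hv
      have := Nat.sInf_le hjmem
      omega
    unfold Dexc D0
    rw [hτ, hτ1, ← hT]
    have hmap : Finset.Icc m (m + T) =
        Finset.map ⟨fun t => m + t, fun a b h => Nat.add_left_cancel h⟩ (Finset.Icc 0 T) := by
      ext t
      simp only [Finset.mem_Icc, Finset.mem_map, Function.Embedding.coeFn_mk]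
      constructor
      · rintro ⟨ht1, ht2⟩
        exact ⟨t - m, ⟨by omega, by omega⟩, by show m + (t - m) = t; omega⟩
      · rintro ⟨j, ⟨_, hj2⟩, rfl⟩
        show m ≤ m + j ∧ m + j ≤ m + T; omega
    rw [hmap, Finset.sup_map]
    rfl
  · -- no next visit
    have hT0 : tauRet s0 (fun k => ω (m + k)) = 0 := by
      rw [hTdef, Set.not_nonempty_iff_eq_empty.1 hne, Nat.sInf_empty]
    have hτ10 : tauSeq s0 ω (n+1) = 0 := by
      show sInf {k | tauSeq s0 ω n < k ∧ (ω k).2 = s0} = 0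
      rw [hτ]
      have : {k | m < k ∧ (ω k).2 = s0} = ∅ := by
        rw [Set.eq_empty_iff_forall_notMem]
        rintro k ⟨hk1, hk2⟩
        refine hne ⟨k - m, by omega, ?_⟩
        have : m + (k - m) = k := by omega
        rw [this]; exact hk2
      rw [this, Nat.sInf_empty]
    unfold Dexc D0
    rw [hτ, hτ10, hT0]
    rcases Nat.eq_zero_or_pos m with rfl | hm
    · simp [Nat.dist_self]
    · have h1 : Finset.Icc m 0 = ∅ := by
        rw [Finset.Icc_eq_empty_iff]
        omega
      rw [h1]
      simp [Nat.dist_self]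

-- Measurability of hitting-time functionals
lemma measSet_firstVisitGt (a m : ℕ) :
    MeasurableSet {ω : ℕ → ℕ × S | sInf {k | a < k ∧ (ω k).2 = s0} = m} := by
  classical
  have hvis : ∀ k : ℕ, MeasurableSet {ω : ℕ → ℕ × S | (ω k).2 = s0} := by
    intro k
    have : {ω : ℕ → ℕ × S | (ω k).2 = s0}
        = (fun ω : ℕ → ℕ × S => (ω k).2) ⁻¹' {s0} := rfl
    rw [this]
    exact ((measurable_pi_apply k).snd) (measurableSet_singleton s0)
  rcases Nat.eq_zero_or_pos m with rfl | hm
  · have heq : {ω : ℕ → ℕ × S | sInf {k | a < k ∧ (ω k).2 = s0} = 0}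
        = ⋂ k : ℕ, {ω : ℕ → ℕ × S | a < k → ¬ ((ω k).2 = s0)} := by
      ext ω
      simp only [Set.mem_setOf_eq, Set.mem_iInter]
      constructor
      · intro h k hak hvisk
        have hne : {k | a < k ∧ (ω k).2 = s0}.Nonempty := ⟨k, hak, hvisk⟩
        obtain ⟨h1, h2⟩ := Nat.sInf_mem hne
        omega
      · intro h
        have : {k | a < k ∧ (ω k).2 = s0} = ∅ := by
          rw [Set.eq_empty_iff_forall_notMem]
          rintro k ⟨h1, h2⟩
          exact h k h1 h2
        rw [this, Nat.sInf_empty]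
    rw [heq]
    refine MeasurableSet.iInter fun k => ?_
    by_cases hak : a < k
    · simp only [hak, true_implies]
      exact (hvis k).compl
    · simp only [hak, false_implies]
      simp [Set.setOf_true]
  · by_cases ham : a < m
    · have heq : {ω : ℕ → ℕ × S | sInf {k | a < k ∧ (ω k).2 = s0} = m}
          = {ω : ℕ → ℕ × S | (ω m).2 = s0 ∧ ∀ k, a < k → k < m → ¬ ((ω k).2 = s0)} := by
        ext ω
        simp only [Set.mem_setOf_eq]
        constructor
        · intro h
          have hnonemp : {k | a < k ∧ (ω k).2 = s0}.Nonempty := by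
            by_contra hemp
            rw [Set.not_nonempty_iff_eq_empty] at hemp
            rw [hemp, Nat.sInf_empty] at h
            omega
          obtain ⟨h1, h2⟩ := Nat.sInf_mem hnonemp
          rw [h] at h1 h2
          refine ⟨h2, ?_⟩
          intro k hk1 hk2 hk3
          have := Nat.sInf_le (show k ∈ {k | a < k ∧ (ω k).2 = s0} from ⟨hk1, hk3⟩)
          omega
        · rintro ⟨h1, h2⟩
          have hmem : m ∈ {k | a < k ∧ (ω k).2 = s0} := ⟨ham, h1⟩
          refine le_antisymm (Nat.sInf_le hmem) ?_
          by_contra hlt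
          push_neg at hlt
          obtain ⟨hg, hv⟩ := Nat.sInf_mem (⟨m, hmem⟩ :
            Set.Nonempty {k | a < k ∧ (ω k).2 = s0})
          exact h2 _ hg hlt hv
      rw [heq]
      refine measurableSet_cyl m _ ?_
      rintro ω ω' hagree ⟨h1, h2⟩
      refine ⟨by rw [← hagree m le_rfl]; exact h1, ?_⟩
      intro k hk1 hk2 hk3
      exact h2 k hk1 hk2 (by rwa [hagree k (by omega)])
    · have heq : {ω : ℕ → ℕ × S | sInf {k | a < k ∧ (ω k).2 = s0} = m} = ∅ := by
        rw [Set.eq_empty_iff_forall_notMem]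
        intro ω h
        simp only [Set.mem_setOf_eq] at h
        by_cases hnonemp : {k | a < k ∧ (ω k).2 = s0}.Nonempty
        · obtain ⟨h1, _⟩ := Nat.sInf_mem hnonemp
          rw [h] at h1
          omega
        · rw [Set.not_nonempty_iff_eq_empty] at hnonemp
          rw [hnonemp, Nat.sInf_empty] at h
          omega
      rw [heq]
      exact MeasurableSet.empty

lemma measSet_firstVisit (m : ℕ) :
    MeasurableSet {ω : ℕ → ℕ × S | sInf {k | (ω k).2 = s0} = m} := by
  classical
  have hvis : ∀ k : ℕ, MeasurableSet {ω : ℕ → ℕ × S | (ω k).2 = s0} := by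
    intro k
    exact ((measurable_pi_apply k).snd) (measurableSet_singleton s0)
  rcases Nat.eq_zero_or_pos m with rfl | hm
  · have heq : {ω : ℕ → ℕ × S | sInf {k | (ω k).2 = s0} = 0}
        = {ω : ℕ → ℕ × S | (ω 0).2 = s0} ∪ ⋂ k : ℕ, {ω : ℕ → ℕ × S | ¬ ((ω k).2 = s0)} := by
      ext ω
      simp only [Set.mem_setOf_eq, Set.mem_union, Set.mem_iInter]
      constructor
      · intro h
        by_cases hnonemp : {k | (ω k).2 = s0}.Nonempty
        · have := Nat.sInf_mem hnonemp
          rw [h] at this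
          exact Or.inl this
        · refine Or.inr fun k hk => hnonemp ⟨k, hk⟩
      · rintro (h | h)
        · exact le_antisymm (Nat.sInf_le h) (Nat.zero_le _)
        · have : {k | (ω k).2 = s0} = ∅ := by
            rw [Set.eq_empty_iff_forall_notMem]; exact h
          rw [this, Nat.sInf_empty]
    rw [heq]
    exact (hvis 0).union (MeasurableSet.iInter fun k => (hvis k).compl)
  · have heq : {ω : ℕ → ℕ × S | sInf {k | (ω k).2 = s0} = m}
        = {ω : ℕ → ℕ × S | (ω m).2 = s0} ∩
            ⋂ k : ℕ, {ω : ℕ → ℕ × S | k < m → ¬ ((ω k).2 = s0)} := by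
      ext ω
      simp only [Set.mem_setOf_eq, Set.mem_inter_iff, Set.mem_iInter]
      constructor
      · intro h
        have hnonemp : {k | (ω k).2 = s0}.Nonempty := by
          by_contra hemp
          rw [Set.not_nonempty_iff_eq_empty] at hemp
          rw [hemp, Nat.sInf_empty] at h
          omega
        have hmem := Nat.sInf_mem hnonemp
        rw [h] at hmem
        refine ⟨hmem, fun k hk hvisk => ?_⟩
        have := Nat.sInf_le (show k ∈ {k | (ω k).2 = s0} from hvisk)
        omega
      · rintro ⟨h1, h2⟩
        refine le_antisymm (Nat.sInf_le h1) ?_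
        by_contra hlt
        push_neg at hlt
        have := Nat.sInf_mem (⟨m, h1⟩ : Set.Nonempty {k | (ω k).2 = s0})
        exact h2 _ hlt this
    rw [heq]
    refine (hvis m).inter (MeasurableSet.iInter fun k => ?_)
    by_cases hk : k < m
    · simp only [hk, true_implies]
      exact (hvis k).compl
    · simp only [hk, false_implies]
      simp [Set.setOf_true]

lemma measurable_tauSeq (n : ℕ) : Measurable (fun ω : ℕ → ℕ × S => tauSeq s0 ω n) := by
  induction n with
  | zero =>
      refine measurable_to_countable' fun m => ?_
      exact measSet_firstVisit s0 m
  | succ n ih =>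
      refine measurable_to_countable' fun m => ?_
      have heq : ((fun ω : ℕ → ℕ × S => tauSeq s0 ω (n+1)) ⁻¹' {m})
          = ⋃ m' : ℕ, (((fun ω : ℕ → ℕ × S => tauSeq s0 ω n) ⁻¹' {m'})
              ∩ {ω | sInf {k | m' < k ∧ (ω k).2 = s0} = m}) := by
        ext ω
        simp only [Set.mem_preimage, Set.mem_singleton_iff, Set.mem_iUnion,
          Set.mem_inter_iff, Set.mem_setOf_eq]
        constructor
        · intro h
          exact ⟨tauSeq s0 ω n, rfl, h⟩
        · rintro ⟨m', h1, h2⟩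
          show sInf {k | tauSeq s0 ω n < k ∧ (ω k).2 = s0} = m
          rw [h1]
          exact h2
      rw [heq]
      exact MeasurableSet.iUnion fun m' =>
        (ih (measurableSet_singleton m')).inter (measSet_firstVisitGt s0 m' m)

lemma measurable_tauRet : Measurable (tauRet s0 : (ℕ → ℕ × S) → ℕ) := by
  refine measurable_to_countable' fun m => ?_
  have heq : (tauRet s0 ⁻¹' {m} : Set (ℕ → ℕ × S))
      = {ω | sInf {k | 0 < k ∧ (ω k).2 = s0} = m} := by
    ext ω
    simp only [Set.mem_preimage, Set.mem_singleton_iff, Set.mem_setOf_eq]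
    unfold tauRet
    constructor
    · intro h
      rw [← h]
      congr 1
    · intro h
      rw [← h]
      congr 1
  rw [heq]
  exact measSet_firstVisitGt s0 0 m

lemma measurableSet_D0_ge (d : ℕ) :
    MeasurableSet {ω : ℕ → ℕ × S | d ≤ D0 s0 ω} := by
  have heq : {ω : ℕ → ℕ × S | d ≤ D0 s0 ω}
      = ⋃ t : ℕ, ((tauRet s0 ⁻¹' {t})
          ∩ {ω | d ≤ Finset.sup (Finset.Icc 0 t) fun k => Nat.dist (ω k).1 (ω 0).1}) := by
    ext ω
    simp only [Set.mem_setOf_eq, Set.mem_iUnion, Set.mem_inter_iff, Set.mem_preimage,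
      Set.mem_singleton_iff]
    constructor
    · intro h
      exact ⟨tauRet s0 ω, rfl, h⟩
    · rintro ⟨t, h1, h2⟩
      unfold D0
      rw [h1]
      exact h2
  rw [heq]
  refine MeasurableSet.iUnion fun t => ?_
  refine (measurable_tauRet s0 (measurableSet_singleton t)).inter ?_
  refine measurableSet_cyl t _ ?_
  intro ω ω' hagree hω
  rw [Set.mem_setOf_eq]
  have : (Finset.Icc 0 t).sup (fun k => Nat.dist (ω' k).1 (ω' 0).1)
      = (Finset.Icc 0 t).sup (fun k => Nat.dist (ω k).1 (ω 0).1) := by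
    refine Finset.sup_congr rfl fun k hk => ?_
    rw [Finset.mem_Icc] at hk
    rw [hagree k hk.2, hagree 0 (Nat.zero_le t)]
  rw [this]
  exact hω

lemma measurableSet_Dexc_ge (n d : ℕ) :
    MeasurableSet {ω : ℕ → ℕ × S | d ≤ Dexc s0 n ω} := by
  have heq : {ω : ℕ → ℕ × S | d ≤ Dexc s0 n ω}
      = ⋃ m : ℕ, ⋃ m' : ℕ, (((fun ω : ℕ → ℕ × S => tauSeq s0 ω n) ⁻¹' {m})
          ∩ ((fun ω : ℕ → ℕ × S => tauSeq s0 ω (n+1)) ⁻¹' {m'})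
          ∩ {ω | d ≤ Finset.sup (Finset.Icc m m') fun k => Nat.dist (ω k).1 (ω m).1}) := by
    ext ω
    simp only [Set.mem_setOf_eq, Set.mem_iUnion, Set.mem_inter_iff, Set.mem_preimage,
      Set.mem_singleton_iff]
    constructor
    · intro h
      exact ⟨tauSeq s0 ω n, tauSeq s0 ω (n+1), ⟨rfl, rfl⟩, h⟩
    · rintro ⟨m, m', ⟨h1, h2⟩, h3⟩
      unfold Dexc
      rw [h1, h2]
      exact h3
  rw [heq]
  refine MeasurableSet.iUnion fun m => MeasurableSet.iUnion fun m' => ?_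
  refine MeasurableSet.inter (MeasurableSet.inter
    (measurable_tauSeq s0 n (measurableSet_singleton m))
    (measurable_tauSeq s0 (n+1) (measurableSet_singleton m'))) ?_
  refine measurableSet_cyl (max m m') _ ?_
  intro ω ω' hagree hω
  rw [Set.mem_setOf_eq]
  have : (Finset.Icc m m').sup (fun k => Nat.dist (ω' k).1 (ω' m).1)
      = (Finset.Icc m m').sup (fun k => Nat.dist (ω k).1 (ω m).1) := by
    refine Finset.sup_congr rfl fun k hk => ?_
    rw [Finset.mem_Icc] at hk
    rw [hagree k (le_trans hk.2 (le_max_right m m')), hagree m (le_max_left m m')]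
  rw [this]
  exact hω

lemma measurableSet_Ex (n x : ℕ) :
    MeasurableSet {ω : ℕ → ℕ × S | (ω (tauSeq s0 ω n)).1 = x} := by
  have heq : {ω : ℕ → ℕ × S | (ω (tauSeq s0 ω n)).1 = x}
      = ⋃ m : ℕ, (((fun ω : ℕ → ℕ × S => tauSeq s0 ω n) ⁻¹' {m})
          ∩ {ω | (ω m).1 = x}) := by
    ext ω
    simp only [Set.mem_setOf_eq, Set.mem_iUnion, Set.mem_inter_iff, Set.mem_preimage,
      Set.mem_singleton_iff]
    constructor
    · intro h
      exact ⟨tauSeq s0 ω n, rfl, h⟩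
    · rintro ⟨m, h1, h2⟩
      rw [h1]
      exact h2
  rw [heq]
  refine MeasurableSet.iUnion fun m => ?_
  refine (measurable_tauSeq s0 n (measurableSet_singleton m)).inter ?_
  exact ((measurable_pi_apply m).fst) (measurableSet_singleton x)

end Strip6



section Strip7

variable {S : Type*} [Fintype S] [DecidableEq S] [Nonempty S]
  [MeasurableSpace S] [MeasurableSingletonClass S]

theorem claim1_gen (X : MChain (ℕ × S)) (s0 : S)
    (hbad : ∀ z, X.P z {ω | ¬ ({k : ℕ | (ω k).2 = s0}.Infinite)} = 0)
    (r Cr : ℝ)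
    (hD0 : ∀ (z : ℕ × S) (d : ℕ), 1 ≤ d →
      X.P z {ω | d ≤ D0 s0 ω} ≤ ENNReal.ofReal (Cr * (d:ℝ)^(-r))) :
    ∀ (z : ℕ × S) (n x d : ℕ), 1 ≤ d →
      X.P z ({ω | d ≤ Dexc s0 n ω} ∩ {ω | (ω (tauSeq s0 ω n)).1 = x})
        ≤ ENNReal.ofReal (Cr * (d:ℝ)^(-r)) * X.P z {ω | (ω (tauSeq s0 ω n)).1 = x} := by
  intro z n x d hd
  classical
  set G : Set (ℕ → ℕ × S) := {ω | {k : ℕ | (ω k).2 = s0}.Infinite} with hG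
  set A : Set (ℕ → ℕ × S) := {ω | d ≤ Dexc s0 n ω} with hA
  set E : Set (ℕ → ℕ × S) := {ω | (ω (tauSeq s0 ω n)).1 = x} with hE
  set A0 : Set (ℕ → ℕ × S) := {ω | d ≤ D0 s0 ω} with hA0
  set base : ℕ → Set (ℕ → ℕ × S) :=
    fun m => Hset s0 n m ∩ {ω | ω m = ((x : ℕ), s0)} with hbase
  set piece : ℕ → Set (ℕ → ℕ × S) :=
    fun m => Hset s0 n m ∩ {ω | ω m = ((x : ℕ), s0)} ∩ {ω | (fun k => ω (m+k)) ∈ A0}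
    with hpiece
  have hsub1 : A ∩ E ∩ G ⊆ ⋃ m, piece m := by
    rintro ω ⟨⟨hAω, hEω⟩, hGω⟩
    have hGω' : {k : ℕ | (ω k).2 = s0}.Infinite := hGω
    have hHm := Hset_of_infinite s0 ω hGω' n
    refine Set.mem_iUnion.2 ⟨tauSeq s0 ω n, ⟨hHm, ?_⟩, ?_⟩
    · show ω (tauSeq s0 ω n) = ((x : ℕ), s0)
      have h2 : (ω (tauSeq s0 ω n)).2 = s0 := hHm.1
      have h1 : (ω (tauSeq s0 ω n)).1 = x := hEω
      rw [Prod.ext_iff]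
      exact ⟨h1, h2⟩
    · show d ≤ D0 s0 (fun k => ω (tauSeq s0 ω n + k))
      rw [← Dexc_shift s0 n (tauSeq s0 ω n) ω rfl]
      exact hAω
  have hpieceEq : ∀ m : ℕ,
      X.P z (piece m)
        = X.P z (base m) * X.P ((x : ℕ), s0) A0 := by
    intro m
    refine X.markov z m ((x : ℕ), s0) A0 (Hset s0 n m) (measurableSet_D0_ge s0 d) ?_
    intro ω ω' hagree hω
    obtain ⟨h1, h2⟩ := hω
    constructor
    · rw [← hagree m le_rfl]; exact h1
    · rw [← h2]
      congr 1
      refine Finset.filter_congr ?_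
      intro k hk
      rw [Finset.mem_range] at hk
      rw [hagree k (by omega)]
  have hbasemeas : ∀ m, MeasurableSet (base m) := fun m =>
    (measurableSet_Hset s0 n m).inter (measurableSet_coord m _)
  have hbasedisj : Pairwise (Function.onFun Disjoint base) := by
    intro m m' hmm'
    refine Set.disjoint_left.2 ?_
    rintro ω ⟨hH, _⟩ ⟨hH', _⟩
    exact hmm' ((tauSeq_eq_of_Hset s0 n m ω hH).symm.trans (tauSeq_eq_of_Hset s0 n m' ω hH'))
  have hbaseE : (⋃ m, base m) ⊆ E := by
    rintro ω ⟨_, ⟨m, rfl⟩, hH, hcoord⟩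
    have hτ := tauSeq_eq_of_Hset s0 n m ω hH
    show (ω (tauSeq s0 ω n)).1 = x
    rw [hτ]
    rw [Set.mem_setOf_eq] at hcoord
    rw [hcoord]
  calc X.P z (A ∩ E)
      ≤ X.P z ((A ∩ E) ∩ G) + X.P z ((A ∩ E) \ G) := measure_le_inter_add_diff _ _ _
    _ ≤ X.P z (⋃ m, piece m) + 0 := by
        refine add_le_add (measure_mono hsub1) (le_of_eq ?_)
        refine measure_mono_null ?_ (hbad z)
        intro ω hω
        exact hω.2
    _ ≤ (∑' m : ℕ, X.P z (piece m)) + 0 := by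
        refine add_le_add (measure_iUnion_le _) le_rfl
    _ = ∑' m : ℕ, X.P z (base m) * X.P ((x : ℕ), s0) A0 := by
        rw [add_zero]
        exact tsum_congr hpieceEq
    _ ≤ ∑' m : ℕ, X.P z (base m) * ENNReal.ofReal (Cr * (d:ℝ)^(-r)) := by
        refine ENNReal.tsum_le_tsum fun m => mul_le_mul_right (hD0 _ d hd) _
    _ = (∑' m : ℕ, X.P z (base m)) * ENNReal.ofReal (Cr * (d:ℝ)^(-r)) :=
        ENNReal.tsum_mul_right
    _ = X.P z (⋃ m, base m) * ENNReal.ofReal (Cr * (d:ℝ)^(-r)) := by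
        rw [measure_iUnion hbasedisj hbasemeas]
    _ ≤ X.P z E * ENNReal.ofReal (Cr * (d:ℝ)^(-r)) :=
        mul_le_mul_left (measure_mono hbaseE) _
    _ = ENNReal.ofReal (Cr * (d:ℝ)^(-r)) * X.P z E := mul_comm _ _

theorem claim2_gen (X : MChain (ℕ × S)) (s0 : S) (r Cr : ℝ) (hCr : 0 ≤ Cr)
    (q : ℝ) (hq0 : 0 < q) (hqr : q < r)
    (hkey : ∀ (z : ℕ × S) (n x d : ℕ), 1 ≤ d →
      X.P z ({ω | d ≤ Dexc s0 n ω} ∩ {ω | (ω (tauSeq s0 ω n)).1 = x})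
        ≤ ENNReal.ofReal (Cr * (d:ℝ)^(-r)) * X.P z {ω | (ω (tauSeq s0 ω n)).1 = x}) :
    ∃ C : ℝ≥0∞, C ≠ ⊤ ∧ ∀ (z : ℕ × S) (n x : ℕ),
      (∫⁻ ω in {ω | (ω (tauSeq s0 ω n)).1 = x}, ((Dexc s0 n ω : ℝ≥0∞)) ^ q ∂(X.P z))
        ≤ C * X.P z {ω | (ω (tauSeq s0 ω n)).1 = x} := by
  classical
  set ρ : ℝ := (2:ℝ)^(q - r) with hρ
  have hρpos : 0 < ρ := Real.rpow_pos_of_pos (by norm_num) _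
  have hρlt : ρ < 1 := Real.rpow_lt_one_of_one_lt_of_neg (by norm_num) (by linarith)
  set a : ℝ := Cr * (2:ℝ)^q with ha
  have ha0 : 0 ≤ a := mul_nonneg hCr (Real.rpow_nonneg (by norm_num) q)
  set Ctail : ℝ≥0∞ := ENNReal.ofReal a * (1 - ENNReal.ofReal ρ)⁻¹ with hCtail
  have hCtailne : Ctail ≠ ⊤ := by
    refine ENNReal.mul_ne_top ENNReal.ofReal_ne_top ?_
    refine ENNReal.inv_ne_top.2 ?_
    rw [ne_eq, tsub_eq_zero_iff_le, not_le]
    exact ENNReal.ofReal_lt_one.2 hρlt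
  refine ⟨1 + Ctail, by
    refine ENNReal.add_ne_top.2 ⟨ENNReal.one_ne_top, hCtailne⟩, ?_⟩
  intro z n x
  set E : Set (ℕ → ℕ × S) := {ω | (ω (tauSeq s0 ω n)).1 = x} with hE
  have hEmeas : MeasurableSet E := measurableSet_Ex s0 n x
  set sk : ℕ → Set (ℕ → ℕ × S) := fun k => {ω | (2^k : ℕ) ≤ Dexc s0 n ω} with hsk
  have hskmeas : ∀ k, MeasurableSet (sk k) := fun k => measurableSet_Dexc_ge s0 n (2^k)
  set ck : ℕ → ℝ≥0∞ := fun k => (((2^(k+1) : ℕ) : ℝ≥0∞))^q with hck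
  set term : ℕ → (ℕ → ℕ × S) → ℝ≥0∞ :=
    fun k => Set.indicator (sk k) (fun _ => ck k) with hterm
  -- pointwise bound
  have hpt : ∀ ω : ℕ → ℕ × S,
      ((Dexc s0 n ω : ℝ≥0∞))^q ≤ 1 + ∑' k : ℕ, term k ω := by
    intro ω
    set D := Dexc s0 n ω with hD
    rcases Nat.eq_zero_or_pos D with hD0 | hD1
    · rw [hD0]
      simp only [Nat.cast_zero]
      rw [ENNReal.zero_rpow_of_pos hq0]
      exact zero_le
    · set k0 := Nat.log 2 D with hk0
      have hlow : 2^k0 ≤ D := Nat.pow_log_le_self 2 (by omega)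
      have hhigh : D < 2^(k0+1) := Nat.lt_pow_succ_log_self (by norm_num) D
      have h1 : ((D : ℝ≥0∞))^q ≤ ck k0 := by
        rw [hck]
        refine ENNReal.rpow_le_rpow ?_ hq0.le
        exact_mod_cast Nat.cast_le.2 hhigh.le
      have h2 : term k0 ω = ck k0 := by
        rw [hterm]
        simp only
        rw [Set.indicator_of_mem]
        exact hlow
      calc ((D : ℝ≥0∞))^q ≤ ck k0 := h1
        _ = term k0 ω := h2.symm
        _ ≤ ∑' k : ℕ, term k ω := ENNReal.le_tsum k0
        _ ≤ 1 + ∑' k : ℕ, term k ω := le_add_self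
  -- integrate
  have hint : (∫⁻ ω in E, ((Dexc s0 n ω : ℝ≥0∞))^q ∂(X.P z))
      ≤ (∫⁻ ω in E, (1 + ∑' k : ℕ, term k ω) ∂(X.P z)) :=
    lintegral_mono fun ω => hpt ω
  refine le_trans hint ?_
  rw [lintegral_add_left measurable_const]
  have honeX : (∫⁻ _ in E, (1:ℝ≥0∞) ∂(X.P z)) = X.P z E := by
    rw [setLIntegral_one]
  rw [honeX]
  have htsum : (∫⁻ ω in E, (∑' k : ℕ, term k ω) ∂(X.P z))
      = ∑' k : ℕ, (∫⁻ ω in E, term k ω ∂(X.P z)) := by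
    rw [lintegral_tsum]
    intro k
    exact (measurable_const.indicator (hskmeas k)).aemeasurable
  have htermint : ∀ k : ℕ, (∫⁻ ω in E, term k ω ∂(X.P z))
      = ck k * X.P z (sk k ∩ E) := by
    intro k
    rw [hterm]
    simp only
    rw [lintegral_indicator_const (hskmeas k), Measure.restrict_apply (hskmeas k)]
  have hbound : ∀ k : ℕ, ck k * X.P z (sk k ∩ E)
      ≤ (ENNReal.ofReal a * ENNReal.ofReal ρ ^ k) * X.P z E := by
    intro k
    have h1 := hkey z n x (2^k) (Nat.one_le_two_pow)
    have h2 : ck k * X.P z (sk k ∩ E)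
        ≤ ck k * (ENNReal.ofReal (Cr * ((2^k : ℕ) : ℝ)^(-r)) * X.P z E) :=
      mul_le_mul_right h1 _
    refine le_trans h2 ?_
    rw [← mul_assoc]
    refine mul_le_mul_left ?_ _
    -- ck k * ofReal (Cr * (2^k)^(-r)) ≤ ofReal a * ofReal ρ ^ k
    have hckof : ck k = ENNReal.ofReal (((2^(k+1) : ℕ) : ℝ)^q) := by
      rw [hck]
      rw [← ENNReal.ofReal_rpow_of_pos (by positivity)]
      congr 1
      rw [ENNReal.ofReal_natCast]
    have e1 : ENNReal.ofReal (((2^(k+1) : ℕ) : ℝ)^q) * ENNReal.ofReal (Cr * ((2^k : ℕ) : ℝ)^(-r))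
        = ENNReal.ofReal ((((2^(k+1) : ℕ) : ℝ))^q * (Cr * ((2^k : ℕ) : ℝ)^(-r))) :=
      (ENNReal.ofReal_mul (Real.rpow_nonneg (by positivity) q)).symm
    have e2 : ENNReal.ofReal a * ENNReal.ofReal ρ ^ k = ENNReal.ofReal (a * ρ^k) := by
      rw [← ENNReal.ofReal_pow hρpos.le, ← ENNReal.ofReal_mul ha0]
    rw [hckof, e1, e2]
    refine ENNReal.ofReal_le_ofReal (le_of_eq ?_)
    -- real computation
    push_cast
    rw [← Real.rpow_natCast (2:ℝ) (k+1), ← Real.rpow_natCast (2:ℝ) k,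
      ← Real.rpow_mul (le_of_lt two_pos), ← Real.rpow_mul (le_of_lt two_pos),
      ← Real.rpow_natCast ρ k]
    rw [hρ, ← Real.rpow_mul (le_of_lt two_pos), ha]
    have key : (2:ℝ) ^ (((k+1 : ℕ) : ℝ) * q) * (2:ℝ) ^ ((k:ℝ) * (-r))
        = (2:ℝ) ^ q * (2:ℝ) ^ ((q - r) * (k:ℝ)) := by
      rw [← Real.rpow_add two_pos, ← Real.rpow_add two_pos]
      congr 1
      push_cast
      ring
    calc (2:ℝ) ^ (((k+1 : ℕ) : ℝ) * q) * (Cr * (2:ℝ) ^ ((k:ℝ) * (-r)))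
        = Cr * ((2:ℝ) ^ (((k+1 : ℕ) : ℝ) * q) * (2:ℝ) ^ ((k:ℝ) * (-r))) := by ring
      _ = Cr * ((2:ℝ) ^ q * (2:ℝ) ^ ((q - r) * (k:ℝ))) := by rw [key]
      _ = Cr * (2:ℝ) ^ q * (2:ℝ) ^ ((q - r) * (k:ℝ)) := by ring
  calc X.P z E + (∫⁻ ω in E, (∑' k : ℕ, term k ω) ∂(X.P z))
      = X.P z E + ∑' k : ℕ, ck k * X.P z (sk k ∩ E) := by
        rw [htsum]
        congr 1
        exact tsum_congr htermint
    _ ≤ X.P z E + ∑' k : ℕ, (ENNReal.ofReal a * ENNReal.ofReal ρ ^ k) * X.P z E := by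
        refine add_le_add_right (ENNReal.tsum_le_tsum hbound) _
    _ = X.P z E + (ENNReal.ofReal a * (∑' k : ℕ, ENNReal.ofReal ρ ^ k)) * X.P z E := by
        congr 1
        rw [ENNReal.tsum_mul_right, ENNReal.tsum_mul_left]
    _ = X.P z E + Ctail * X.P z E := by
        rw [hCtail, ENNReal.tsum_geometric]
    _ = (1 + Ctail) * X.P z E := by
        rw [add_mul, one_mul]

end Strip7

/-- Lemma (maximal excursion displacement): under (B_p) for some `p > 1` and (Q_∞), for any
`q ∈ (0,p)`, uniformly in the starting point `x` of the excursion,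
`P[D_n ≥ d | X_{τ_n} = x] = O(d^{−q})` and `E[D_n^q | X_{τ_n} = x]` is uniformly bounded. -/
theorem stmt12 (X : MChain (ℕ × S)) (hirr : X.Irreducible) (s0 : S)
    (p : ℝ) (hp : 1 < p) (hB : CondB X p)
    (Q : S → S → ℝ) (pst : S → ℝ) (hQ : CondQ X Q) (hpst : IsStationaryDist Q pst)
    (q : ℝ) (hq0 : 0 < q) (hqp : q < p) :
    (∃ C : ℝ, ∀ (z : ℕ × S) (n x d : ℕ), 1 ≤ d →
      X.P z ({ω | d ≤ Dexc s0 n ω} ∩ {ω | (ω (tauSeq s0 ω n)).1 = x})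
        ≤ ENNReal.ofReal (C * (d : ℝ) ^ (-q)) *
            X.P z {ω | (ω (tauSeq s0 ω n)).1 = x}) ∧
    (∃ C : ℝ≥0∞, C ≠ ⊤ ∧ ∀ (z : ℕ × S) (n x : ℕ),
      (∫⁻ ω in {ω | (ω (tauSeq s0 ω n)).1 = x}, ((Dexc s0 n ω : ℝ≥0∞)) ^ q ∂(X.P z))
        ≤ C * X.P z {ω | (ω (tauSeq s0 ω n)).1 = x})     := by
  obtain ⟨N, εr, hN, hεr0, hεr1, hhit⟩ := uniform_hit X hirr s0 p hp hB Q hQ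
  obtain ⟨C, hCne, hC⟩ := hB
  have hbad := fun z => bad_null X s0 N hN εr hεr0 hεr1 hhit z
  constructor
  · obtain ⟨Cq, hCqpos, hCq⟩ := D0_tail X s0 p hp C hCne hC N hN εr hεr0 hεr1 hhit q hq0 hqp
    exact ⟨Cq, claim1_gen X s0 hbad q Cq hCq⟩
  · have hqr : q < (q + p)/2 := by linarith
    have hrp : (q + p)/2 < p := by linarith
    have hr0 : 0 < (q + p)/2 := by linarith
    obtain ⟨Cr, hCrpos, hCr⟩ := D0_tail X s0 p hp C hCne hC N hN εr hεr0 hεr1 hhit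
      ((q + p)/2) hr0 hrp
    exact claim2_gen X s0 ((q + p)/2) Cr hCrpos.le q hq0 hqr (claim1_gen X s0 hbad ((q + p)/2) Cr hCr)
end

section
/- Let (Z_n) be an irreducible time-homogeneous Markov chain on ℤ≥0. If there exists ε > 0 such that sup_z E[|Z_{n+1} − Z_n|^{1+ε} | Z_n = z] < ∞ and liminf_{z→∞} E[Z_{n+1} − Z_n | Z_n = z] > 0, then (Z_n) is transient. -/
open MeasureTheory Filter Topology Asymptotics
open scoped ENNReal NNReal

set_option maxHeartbeats 1000000

namespace Tr16
open Real

lemma bern_neg1 {q : ℝ} (hq0 : 0 < q) (hq1 : q ≤ 1) {x : ℝ} (hx : 0 < x) :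
    1 - q * (x - 1) ≤ x ^ (-q) := by
  rcases le_or_gt (1 - q * (x - 1)) 0 with h0 | h0
  · exact h0.trans (rpow_pos_of_pos hx _).le
  · have hB : x ^ q ≤ 1 + q * (x - 1) := by
      have := rpow_one_add_le_one_add_mul_self (s := x - 1) (p := q)
        (by linarith) hq0.le hq1
      simpa using this
    have hxq : (0:ℝ) < x ^ q := rpow_pos_of_pos hx _
    have key : (1 - q * (x - 1)) * x ^ q ≤ 1 := by
      calc (1 - q * (x - 1)) * x ^ q ≤ (1 - q * (x - 1)) * (1 + q * (x - 1)) :=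
            mul_le_mul_of_nonneg_left hB h0.le
        _ = 1 - (q * (x - 1)) ^ 2 := by ring
        _ ≤ 1 := by nlinarith [sq_nonneg (q * (x - 1))]
    have : 1 - q * (x - 1) ≤ 1 / x ^ q := (le_div_iff₀ hxq).2 key
    rwa [Real.rpow_neg hx.le, ← one_div]

/-- Bernoulli-type inequality: tangent line below convex `x ↦ x^(-q)` at `x = 1`. -/
lemma bern_neg {q : ℝ} (hq0 : 0 < q) (hq2 : q ≤ 2) {x : ℝ} (hx : 0 < x) :
    1 - q * (x - 1) ≤ x ^ (-q) := by
  rcases le_or_gt q 1 with hq1 | hq1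
  · exact bern_neg1 hq0 hq1 hx
  · have h2 : (0:ℝ) < q / 2 := by linarith
    have hhalf : 1 - (q / 2) * (x - 1) ≤ x ^ (-(q / 2)) :=
      bern_neg1 h2 (by linarith) hx
    have hsq : x ^ (-q) = x ^ (-(q/2)) * x ^ (-(q/2)) := by
      rw [← Real.rpow_add hx]; ring_nf
    rcases le_or_gt (1 - (q/2) * (x - 1)) 0 with h0 | h0
    · have : 1 - q * (x - 1) ≤ 0 := by nlinarith
      exact this.trans (rpow_pos_of_pos hx _).le
    · have hr : (0:ℝ) ≤ x ^ (-(q/2)) := (rpow_pos_of_pos hx _).le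
      rw [hsq]
      nlinarith [mul_le_mul hhalf hhalf h0.le hr, sq_nonneg (q/2*(x-1))]

/-- Tangent line inequality for `t ↦ t^(-q)` at `a`. -/
lemma tangent {q : ℝ} (hq0 : 0 < q) (hq2 : q ≤ 2) {a b : ℝ} (ha : 0 < a) (hb : 0 < b) :
    a ^ (-q) - q * a ^ (-q - 1) * (b - a) ≤ b ^ (-q) := by
  have h := bern_neg hq0 hq2 (x := b / a) (div_pos hb ha)
  have hba : (b / a) ^ (-q) = b ^ (-q) / a ^ (-q) := Real.div_rpow hb.le ha.le _
  have haq : (0:ℝ) < a ^ (-q) := rpow_pos_of_pos ha _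
  have h2 : (1 - q * (b / a - 1)) * a ^ (-q) ≤ b ^ (-q) := by
    calc (1 - q * (b / a - 1)) * a ^ (-q) ≤ (b / a) ^ (-q) * a ^ (-q) :=
          mul_le_mul_of_nonneg_right h haq.le
      _ = b ^ (-q) := by rw [hba]; field_simp
  have ha1 : a ^ (-q - 1) = a ^ (-q) / a := by
    rw [Real.rpow_sub ha, Real.rpow_one]
  calc a ^ (-q) - q * a ^ (-q - 1) * (b - a)
      = (1 - q * (b / a - 1)) * a ^ (-q) := by rw [ha1]; field_simp
    _ ≤ b ^ (-q) := h2

lemma key_ineq {α ε : ℝ} (hα0 : 0 < α) (hα1 : α ≤ 1) (hε0 : 0 < ε) (hε1 : ε ≤ 1)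
    {z y : ℝ} (hz : 2 ≤ z) (hy : 0 ≤ y) :
    (y + 1) ^ (-α) ≤ (z + 1) ^ (-α) - α * (z + 1) ^ (-α - 1) * (y - z)
      + (32 * z ^ (-α - 1 - ε) + 4 * z ^ (-1 - ε)) * |y - z| ^ (1 + ε) := by
  have hz0 : (0:ℝ) < z := by linarith
  have hu : (0:ℝ) < z + 1 := by linarith
  have hv : (0:ℝ) < y + 1 := by linarith
  have hz2 : (0:ℝ) < z / 2 := by linarith
  have hXnn : (0:ℝ) ≤ z ^ (-α - 1 - ε) * |y - z| ^ (1 + ε) := by positivity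
  have hYnn : (0:ℝ) ≤ z ^ (-1 - ε) * |y - z| ^ (1 + ε) := by positivity
  rcases le_or_gt (|y - z|) (z / 2) with hsmall | hbig
  · -- small jump case
    have habs := abs_le.1 hsmall
    have hvz : z / 2 ≤ y + 1 := by linarith [habs.1]
    have huz : z / 2 ≤ z + 1 := by linarith
    -- step 1
    have step1 : (y+1) ^ (-α) ≤ (z+1) ^ (-α) + α * (y+1) ^ (-α - 1) * ((z+1) - (y+1)) := by
      have t := tangent hα0 (by linarith) hv hu
      ring_nf at t ⊢
      linarith [t]
    -- step 2 bounds
    have hexp1 : ∀ t : ℝ, t ^ (-(α+1)) = t ^ (-α - 1) := fun t => by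
      rw [show -(α+1) = -α - 1 from by ring]
    have hexp2 : ∀ t : ℝ, t ^ (-(α+1) - 1) = t ^ (-α - 2) := fun t => by
      rw [show -(α+1) - 1 = -α - 2 from by ring]
    have hW : ∀ t : ℝ, z / 2 ≤ t → t ^ (-α - 2) ≤ (z/2) ^ (-α - 2) := fun t ht =>
      rpow_le_rpow_of_nonpos hz2 ht (by linarith)
    have step2 : α * (y - z) * ((z+1) ^ (-α-1) - (y+1) ^ (-α-1))
        ≤ α * (α+1) * (z/2) ^ (-α-2) * (y - z)^2 := by
      rcases le_or_gt z y with hyz | hyz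
      · have t := tangent (q := α + 1) (by linarith) (by linarith) hu hv
        rw [hexp1, hexp1, hexp2] at t
        -- t : (z+1)^(-α-1) - (α+1) * (z+1)^(-α-2) * ((y+1)-(z+1)) ≤ (y+1)^(-α-1)
        have hWu := hW _ huz
        have h1 : (z+1) ^ (-α-1) - (y+1) ^ (-α-1) ≤ (α+1) * (z+1) ^ (-α-2) * (y - z) := by
          ring_nf at t ⊢; linarith [t]
        have hf1 : 0 ≤ α * (y - z) := mul_nonneg hα0.le (by linarith)
        calc α * (y - z) * ((z+1) ^ (-α-1) - (y+1) ^ (-α-1))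
            ≤ α * (y - z) * ((α+1) * (z+1) ^ (-α-2) * (y - z)) :=
              mul_le_mul_of_nonneg_left h1 hf1
          _ = α * (α+1) * (y-z)^2 * ((z+1) ^ (-α-2)) := by ring
          _ ≤ α * (α+1) * (y-z)^2 * ((z/2) ^ (-α-2)) :=
              mul_le_mul_of_nonneg_left hWu (by positivity)
          _ = α * (α+1) * (z/2) ^ (-α-2) * (y - z)^2 := by ring
      · have t := tangent (q := α + 1) (by linarith) (by linarith) hv hu
        rw [hexp1, hexp1, hexp2] at t
        -- t : (y+1)^(-α-1) - (α+1) * (y+1)^(-α-2) * ((z+1)-(y+1)) ≤ (z+1)^(-α-1)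
        have hWv := hW _ hvz
        have h1 : -((z+1) ^ (-α-1) - (y+1) ^ (-α-1)) ≤ (α+1) * (y+1) ^ (-α-2) * (z - y) := by
          ring_nf at t ⊢; linarith [t]
        have hf1 : (0:ℝ) ≤ α * (z - y) := mul_nonneg hα0.le (by linarith)
        calc α * (y - z) * ((z+1) ^ (-α-1) - (y+1) ^ (-α-1))
            = α * (z - y) * (-((z+1) ^ (-α-1) - (y+1) ^ (-α-1))) := by ring
          _ ≤ α * (z - y) * ((α+1) * (y+1) ^ (-α-2) * (z - y)) :=
              mul_le_mul_of_nonneg_left h1 hf1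
          _ = α * (α+1) * (z-y)^2 * ((y+1) ^ (-α-2)) := by ring
          _ ≤ α * (α+1) * (z-y)^2 * ((z/2) ^ (-α-2)) :=
              mul_le_mul_of_nonneg_left hWv (by positivity)
          _ = α * (α+1) * (z/2) ^ (-α-2) * (y - z)^2 := by ring
    -- step 3
    have step3 : (y - z)^2 ≤ z ^ (1 - ε) * |y - z| ^ (1 + ε) := by
      rcases eq_or_lt_of_le (abs_nonneg (y - z)) with hd0 | hd0
      · rw [← hd0]
        have : (y - z)^2 = 0 := by
          have := abs_eq_zero.1 hd0.symm; nlinarith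
        rw [this, zero_rpow (by linarith), mul_zero]
      · have e1 : (y - z)^2 = |y - z| ^ (1 + ε) * |y - z| ^ (1 - ε) := by
          rw [← Real.rpow_add hd0, show (1 + ε) + (1 - ε) = (2:ℝ) from by ring]
          rw [show ((2:ℝ)) = ((2:ℕ):ℝ) from by norm_num, Real.rpow_natCast, sq_abs]
        have e2 : |y - z| ^ (1 - ε) ≤ z ^ (1 - ε) :=
          rpow_le_rpow (abs_nonneg _) (by linarith) (by linarith)
        rw [e1]
        calc |y - z| ^ (1 + ε) * |y - z| ^ (1 - ε) ≤ |y - z| ^ (1 + ε) * z ^ (1 - ε) :=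
              mul_le_mul_of_nonneg_left e2 (by positivity)
          _ = z ^ (1 - ε) * |y - z| ^ (1 + ε) := by ring
    -- step 4
    have step4 : α * (α+1) * (z/2) ^ (-α-2) * (y - z)^2
        ≤ 16 * (z ^ (-α - 1 - ε) * |y - z| ^ (1 + ε)) := by
      have hzd : (z/2) ^ (-α-2) ≤ 8 * z ^ (-α-2) := by
        have e : (z/2) ^ (-α-2) = z ^ (-α-2) * 2 ^ (α+2) := by
          rw [Real.div_rpow hz0.le (by norm_num),
            show (-α - 2 : ℝ) = -(α+2) from by ring,
            Real.rpow_neg (by norm_num : (0:ℝ) ≤ 2) (α+2), div_eq_mul_inv, inv_inv]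
        have h8 : (2:ℝ) ^ (α+2) ≤ 8 := by
          calc (2:ℝ) ^ (α+2) ≤ 2 ^ (3:ℝ) :=
                rpow_le_rpow_of_exponent_le one_le_two (by linarith)
            _ = 8 := by
                rw [show ((3:ℝ)) = ((3:ℕ):ℝ) from by norm_num, Real.rpow_natCast]; norm_num
        calc (z/2) ^ (-α-2) = z ^ (-α-2) * 2 ^ (α+2) := e
          _ ≤ z ^ (-α-2) * 8 := mul_le_mul_of_nonneg_left h8 (by positivity)
          _ = 8 * z ^ (-α-2) := by ring
      have ezz : z ^ (-α-2) * z ^ (1 - ε) = z ^ (-α - 1 - ε) := by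
        rw [← Real.rpow_add hz0]; ring_nf
      have hαα : α * (α + 1) ≤ 2 := by nlinarith
      calc α * (α+1) * (z/2) ^ (-α-2) * (y - z)^2
          ≤ α * (α+1) * (z/2) ^ (-α-2) * (z ^ (1 - ε) * |y - z| ^ (1 + ε)) := by
            apply mul_le_mul_of_nonneg_left step3 (by positivity)
        _ ≤ 2 * (8 * z ^ (-α-2)) * (z ^ (1 - ε) * |y - z| ^ (1 + ε)) := by
            apply mul_le_mul_of_nonneg_right _ (by positivity)
            calc α * (α+1) * (z/2) ^ (-α-2) ≤ 2 * (z/2) ^ (-α-2) :=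
                  mul_le_mul_of_nonneg_right hαα (by positivity)
              _ ≤ 2 * (8 * z ^ (-α-2)) := by
                  have := mul_le_mul_of_nonneg_left hzd (by norm_num : (0:ℝ) ≤ 2)
                  linarith
        _ = 16 * (z ^ (-α-2) * z ^ (1-ε) * |y - z| ^ (1 + ε)) := by ring
        _ = 16 * (z ^ (-α - 1 - ε) * |y - z| ^ (1 + ε)) := by rw [ezz]
    -- assemble
    have comb : (y+1) ^ (-α) - (z+1) ^ (-α) + α * (z+1) ^ (-α-1) * (y - z)
        ≤ 16 * (z ^ (-α - 1 - ε) * |y - z| ^ (1 + ε)) := by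
      ring_nf at step1 step2 step4 ⊢
      linarith [step1, step2, step4]
    ring_nf at comb hXnn hYnn ⊢
    linarith [comb, hXnn, hYnn]
  · -- big jump case
    have hd0 : (0:ℝ) < |y - z| := lt_trans hz2 hbig
    have hA : (y+1) ^ (-α) ≤ 1 :=
      rpow_le_one_of_one_le_of_nonpos (by linarith) (by linarith)
    have hB : 1 ≤ 4 * (z ^ (-1 - ε) * |y - z| ^ (1 + ε)) := by
      have hr : (1:ℝ) ≤ |y - z| * (2 / z) := by
        have h1 : (z/2) * (2/z) = 1 := by field_simp
        have h2 : (z/2) * (2/z) ≤ |y-z| * (2/z) :=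
          mul_le_mul_of_nonneg_right hbig.le (by positivity)
        linarith
      have h1 : (1:ℝ) ≤ (|y - z| * (2 / z)) ^ (1 + ε) :=
        one_le_rpow hr (by linarith)
      have e1 : (|y - z| * (2 / z)) ^ (1 + ε) = |y - z| ^ (1+ε) * (2/z) ^ (1+ε) :=
        Real.mul_rpow (abs_nonneg _) (by positivity)
      have e2 : ((2:ℝ)/z) ^ (1+ε) ≤ 4 * z ^ (-1 - ε) := by
        have : ((2:ℝ)/z) ^ (1+ε) = 2 ^ (1+ε) * z ^ (-1-ε) := by
          rw [Real.div_rpow (by norm_num) hz0.le, show -1 - ε = -(1+ε) from by ring,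
            Real.rpow_neg hz0.le]
          ring
        rw [this]
        apply mul_le_mul_of_nonneg_right _ (by positivity)
        calc (2:ℝ) ^ (1+ε) ≤ 2 ^ (2:ℝ) := rpow_le_rpow_of_exponent_le one_le_two (by linarith)
          _ = 4 := by
              rw [show ((2:ℝ)) = ((2:ℕ):ℝ) from by norm_num, Real.rpow_natCast]; norm_num
      calc (1:ℝ) ≤ |y - z| ^ (1+ε) * (2/z) ^ (1+ε) := by rw [← e1]; exact h1
        _ ≤ |y - z| ^ (1+ε) * (4 * z ^ (-1-ε)) :=
            mul_le_mul_of_nonneg_left e2 (by positivity)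
        _ = 4 * (z ^ (-1 - ε) * |y - z| ^ (1 + ε)) := by ring
    have hC : α * (z+1) ^ (-α - 1) * (y - z) ≤ 2 * (z ^ (-α - 1 - ε) * |y - z| ^ (1 + ε)) := by
      have h1 : α * (z+1) ^ (-α-1) * (y - z) ≤ z ^ (-α-1) * |y - z| := by
        have hu' : (z+1) ^ (-α-1) ≤ z ^ (-α-1) :=
          rpow_le_rpow_of_nonpos hz0 (by linarith) (by linarith)
        have : α * (z+1) ^ (-α-1) * (y - z) ≤ α * (z+1) ^ (-α-1) * |y - z| :=
          mul_le_mul_of_nonneg_left (le_abs_self _) (by positivity)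
        calc α * (z+1) ^ (-α-1) * (y - z) ≤ α * (z+1) ^ (-α-1) * |y - z| := this
          _ ≤ 1 * (z ^ (-α-1)) * |y - z| := by
              apply mul_le_mul_of_nonneg_right _ (abs_nonneg _)
              nlinarith [rpow_nonneg (by linarith : (0:ℝ) ≤ z+1) (-α-1), hu',
                rpow_nonneg hz0.le (-α-1)]
          _ = z ^ (-α-1) * |y - z| := by ring
      have h2 : |y - z| = |y - z| ^ (1+ε) * |y - z| ^ (-ε) := by
        rw [← Real.rpow_add hd0, show (1+ε) + -ε = (1:ℝ) from by ring, Real.rpow_one]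
      have h3 : |y - z| ^ (-ε) ≤ 2 * z ^ (-ε) := by
        have : |y - z| ^ (-ε) ≤ (z/2) ^ (-ε) :=
          rpow_le_rpow_of_nonpos hz2 hbig.le (by linarith)
        have e : (z/2) ^ (-ε) = z ^ (-ε) * 2 ^ ε := by
          rw [Real.div_rpow hz0.le (by norm_num),
            Real.rpow_neg (by norm_num : (0:ℝ) ≤ 2) ε, div_eq_mul_inv, inv_inv]
        have h2e : (2:ℝ) ^ ε ≤ 2 := by
          calc (2:ℝ) ^ ε ≤ 2 ^ (1:ℝ) := rpow_le_rpow_of_exponent_le one_le_two hε1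
            _ = 2 := rpow_one 2
        calc |y - z| ^ (-ε) ≤ (z/2) ^ (-ε) := this
          _ = z ^ (-ε) * 2 ^ ε := e
          _ ≤ z ^ (-ε) * 2 := mul_le_mul_of_nonneg_left h2e (by positivity)
          _ = 2 * z ^ (-ε) := by ring
      have ezz : z ^ (-α-1) * z ^ (-ε) = z ^ (-α - 1 - ε) := by
        rw [← Real.rpow_add hz0]; ring_nf
      calc α * (z+1) ^ (-α - 1) * (y - z) ≤ z ^ (-α-1) * |y - z| := h1
        _ = z ^ (-α-1) * (|y - z| ^ (1+ε) * |y - z| ^ (-ε)) := by rw [← h2]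
        _ ≤ z ^ (-α-1) * (|y - z| ^ (1+ε) * (2 * z ^ (-ε))) := by
            apply mul_le_mul_of_nonneg_left _ (by positivity)
            exact mul_le_mul_of_nonneg_left h3 (by positivity)
        _ = 2 * ((z ^ (-α-1) * z ^ (-ε)) * |y - z| ^ (1+ε)) := by ring
        _ = 2 * (z ^ (-α - 1 - ε) * |y - z| ^ (1 + ε)) := by rw [ezz]
    have hu0 : (0:ℝ) ≤ (z+1) ^ (-α) := rpow_nonneg (by linarith) _
    ring_nf at hA hB hC hXnn hYnn hu0 ⊢
    linarith [hA, hB, hC, hXnn, hYnn, hu0]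

end Tr16
section Transience16

namespace Tr16

open Set

variable (Z : MChain ℕ)

/-- one-step transition probabilities -/
noncomputable def pp (z w : ℕ) : ℝ≥0∞ := Z.P z {ω | ω 1 = w}

lemma measSet_coord (n w : ℕ) : MeasurableSet {ω : ℕ → ℕ | ω n = w} := by
  have h : {ω : ℕ → ℕ | ω n = w} = (fun ω : ℕ → ℕ => ω n) ⁻¹' {w} := by ext; simp
  rw [h]; exact measurable_pi_apply n (measurableSet_singleton w)

lemma measurable_shift : Measurable (fun (ω : ℕ → ℕ) (k : ℕ) => ω (1 + k)) :=
  measurable_pi_lambda _ fun k => measurable_pi_apply (1 + k)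

lemma P_compl_init (z : ℕ) : Z.P z {ω | ω 0 = z}ᶜ = 0 := by
  have h1 := Z.init z
  have := Z.isProb z
  rw [measure_compl (measSet_coord 0 z) (by simp [h1])]
  simp [h1]

lemma P_ne_init (z v : ℕ) (h : v ≠ z) : Z.P z {ω | ω 0 = v} = 0 := by
  refine measure_mono_null ?_ (P_compl_init Z z)
  intro ω hω
  simp only [mem_setOf_eq, mem_compl_iff] at *
  rw [hω]; exact h

lemma measure_inter_full (z : ℕ) (s t : Set (ℕ → ℕ)) (ht : Z.P z tᶜ = 0) :
    Z.P z (s ∩ t) = Z.P z s := by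
  refine le_antisymm (measure_mono inter_subset_left) ?_
  have : s ⊆ (s ∩ t) ∪ tᶜ := by
    intro x hx
    by_cases h : x ∈ t
    · exact Or.inl ⟨hx, h⟩
    · exact Or.inr h
  calc Z.P z s ≤ Z.P z ((s ∩ t) ∪ tᶜ) := measure_mono this
    _ ≤ Z.P z (s ∩ t) + Z.P z tᶜ := measure_union_le _ _
    _ = Z.P z (s ∩ t) := by rw [ht, add_zero]

/-- One-step Markov decomposition for shifted events. -/
lemma oneStep (z : ℕ) (A : Set (ℕ → ℕ)) (hA : MeasurableSet A) :
    Z.P z {ω | (fun k => ω (1 + k)) ∈ A} = ∑' w, pp Z z w * Z.P w A := by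
  have hparts : {ω : ℕ → ℕ | (fun k => ω (1 + k)) ∈ A} =
      ⋃ w, ({ω | ω 1 = w} ∩ {ω | (fun k => ω (1 + k)) ∈ A}) := by
    ext ω
    simp only [mem_setOf_eq, mem_iUnion, mem_inter_iff]
    exact ⟨fun h => ⟨ω 1, rfl, h⟩, fun ⟨w, _, h⟩ => h⟩
  have hd : Pairwise (Function.onFun Disjoint
      fun w => ({ω : ℕ → ℕ | ω 1 = w} ∩ {ω | (fun k => ω (1 + k)) ∈ A})) := by
    intro i j hij
    refine Set.disjoint_left.2 fun ω hi hj => hij ?_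
    rw [← hi.1, ← hj.1]
  have hm : ∀ w, MeasurableSet ({ω : ℕ → ℕ | ω 1 = w} ∩ {ω | (fun k => ω (1 + k)) ∈ A}) :=
    fun w => (measSet_coord 1 w).inter (measurable_shift hA)
  rw [hparts, measure_iUnion hd hm]
  refine tsum_congr fun w => ?_
  have := Z.markov z 1 w A univ hA (fun _ _ _ h => h)
  simpa [Set.univ_inter, pp] using this

/-- Chapman–Kolmogorov style decomposition. -/
lemma chapman (z v n : ℕ) :
    Z.P z {ω | ω (n + 1) = v} = ∑' w, Z.P z {ω | ω n = w} * pp Z w v := by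
  have hparts : {ω : ℕ → ℕ | ω (n + 1) = v} =
      ⋃ w, ({ω | ω n = w} ∩ {ω | ω (n + 1) = v}) := by
    ext ω
    simp only [mem_setOf_eq, mem_iUnion, mem_inter_iff]
    exact ⟨fun h => ⟨ω n, rfl, h⟩, fun ⟨w, _, h⟩ => h⟩
  have hd : Pairwise (Function.onFun Disjoint
      fun w => ({ω : ℕ → ℕ | ω n = w} ∩ {ω | ω (n + 1) = v})) := by
    intro i j hij
    refine Set.disjoint_left.2 fun ω hi hj => hij ?_
    rw [← hi.1, ← hj.1]
  have hm : ∀ w, MeasurableSet ({ω : ℕ → ℕ | ω n = w} ∩ {ω | ω (n + 1) = v}) :=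
    fun w => (measSet_coord n w).inter (measSet_coord (n+1) v)
  rw [hparts, measure_iUnion hd hm]
  refine tsum_congr fun w => ?_
  have h2 : ({ω : ℕ → ℕ | ω n = w} ∩ {ω | ω (n + 1) = v}) =
      univ ∩ {ω | ω n = w} ∩ {ω | (fun k => ω (n + k)) ∈ {ω' : ℕ → ℕ | ω' 1 = v}} := by
    simp [Set.univ_inter]
  rw [h2, Z.markov z n w _ univ (measSet_coord 1 v) (fun _ _ _ h => h)]
  simp [Set.univ_inter, pp]

lemma pp_sum (z : ℕ) : ∑' w, pp Z z w = 1 := by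
  have hparts : (univ : Set (ℕ → ℕ)) = ⋃ w, {ω : ℕ → ℕ | ω 1 = w} := by
    ext ω; simp only [mem_univ, mem_iUnion, mem_setOf_eq, true_iff]; exact ⟨ω 1, rfl⟩
  have hd : Pairwise (Function.onFun Disjoint fun w => {ω : ℕ → ℕ | ω 1 = w}) := by
    intro i j hij
    refine Set.disjoint_left.2 fun ω hi hj => hij ?_
    rw [← hi, ← hj]
  have := Z.isProb z
  calc ∑' w, pp Z z w = Z.P z (⋃ w, {ω : ℕ → ℕ | ω 1 = w}) :=
        (measure_iUnion hd fun w => measSet_coord 1 w).symm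
    _ = 1 := by rw [← hparts]; exact measure_univ

lemma pp_le_one (z w : ℕ) : pp Z z w ≤ 1 := by
  have := Z.isProb z; exact prob_le_one

/-- one-step reachability relation -/
def Reach : ℕ → ℕ → Prop := Relation.ReflTransGen (fun z w => pp Z z w ≠ 0)

lemma reach_of_pos (z : ℕ) : ∀ (n v : ℕ), Z.P z {ω | ω n = v} ≠ 0 → Reach Z z v := by
  intro n
  induction n with
  | zero =>
    intro v hv
    by_cases h : v = z
    · subst h; exact Relation.ReflTransGen.refl
    · exact absurd (P_ne_init Z z v h) hv
  | succ n ih =>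
    intro v hv
    rw [chapman] at hv
    obtain ⟨w, hw⟩ : ∃ w, Z.P z {ω | ω n = w} * pp Z w v ≠ 0 := by
      by_contra h
      push_neg at h
      exact hv (ENNReal.tsum_eq_zero.2 h)
    have h1 : Z.P z {ω | ω n = w} ≠ 0 := fun h => hw (by rw [h, zero_mul])
    have h2 : pp Z w v ≠ 0 := fun h => hw (by rw [h, mul_zero])
    exact (ih w h1).tail h2

/-- the event of ever hitting `0`. -/
def hit0 : Set (ℕ → ℕ) := {ω | ∃ n, ω n = 0}

lemma hit0_eq : hit0 = ⋃ n, {ω : ℕ → ℕ | ω n = 0} := by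
  ext ω; simp [hit0]

lemma measSet_hit0 : MeasurableSet hit0 := by
  rw [hit0_eq]; exact MeasurableSet.iUnion fun n => measSet_coord n 0

lemma shift_hit0 : {ω : ℕ → ℕ | (fun k => ω (1 + k)) ∈ hit0} = {ω | ∃ n, 1 ≤ n ∧ ω n = 0} := by
  ext ω
  simp only [mem_setOf_eq, hit0]
  constructor
  · rintro ⟨n, hn⟩; exact ⟨1 + n, by omega, hn⟩
  · rintro ⟨n, hn1, hn⟩; exact ⟨n - 1, by rw [show 1 + (n - 1) = n by omega]; exact hn⟩

lemma h_zero : Z.P 0 hit0 = 1 := by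
  have := Z.isProb 0
  refine le_antisymm prob_le_one ?_
  calc (1:ℝ≥0∞) = Z.P 0 {ω | ω 0 = 0} := (Z.init 0).symm
    _ ≤ Z.P 0 hit0 := measure_mono fun ω hω => ⟨0, hω⟩

lemma ret_one (hrec : Z.Recurrent) (z : ℕ) (hz : Z.P z hit0 = 1) :
    Z.P z {ω | ∃ n, 1 ≤ n ∧ ω n = 0} = 1 := by
  have := Z.isProb z
  by_cases h0 : z = 0
  · subst h0; exact hrec 0
  · refine le_antisymm prob_le_one ?_
    have hsub : hit0 ⊆ {ω : ℕ → ℕ | ∃ m, 1 ≤ m ∧ ω m = 0} ∪ {ω | ω 0 = 0} := by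
      rintro ω ⟨n, hn⟩
      rcases Nat.eq_zero_or_pos n with h | h
      · exact Or.inr (show ω 0 = 0 from h ▸ hn)
      · exact Or.inl (show ∃ m, 1 ≤ m ∧ ω m = 0 from ⟨n, h, hn⟩)
    calc (1:ℝ≥0∞) = Z.P z hit0 := hz.symm
      _ ≤ Z.P z ({ω | ∃ m, 1 ≤ m ∧ ω m = 0} ∪ {ω | ω 0 = 0}) := measure_mono hsub
      _ ≤ Z.P z {ω | ∃ m, 1 ≤ m ∧ ω m = 0} + Z.P z {ω | ω 0 = 0} := measure_union_le _ _
      _ = Z.P z {ω | ∃ n, 1 ≤ n ∧ ω n = 0} := by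
          rw [P_ne_init Z z 0 (Ne.symm h0), add_zero]

lemma hit_step (hrec : Z.Recurrent) (z : ℕ) (hz : Z.P z hit0 = 1) :
    ∀ w, pp Z z w ≠ 0 → Z.P w hit0 = 1 := by
  intro w hw
  have h1 : ∑' v, pp Z z v * Z.P v hit0 = 1 := by
    rw [← oneStep Z z hit0 measSet_hit0, shift_hit0]
    exact ret_one Z hrec z hz
  by_contra hne
  have hlt : Z.P w hit0 < 1 := lt_of_le_of_ne (by have := Z.isProb w; exact prob_le_one) hne
  have hterm : ∀ v, pp Z z v * Z.P v hit0 ≤ pp Z z v := fun v =>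
    mul_le_of_le_one_right zero_le (by have := Z.isProb v; exact prob_le_one)
  have hstrict : pp Z z w * Z.P w hit0 < pp Z z w := by
    conv_rhs => rw [← mul_one (pp Z z w)]
    exact ENNReal.mul_lt_mul_iff_right hw (ne_top_of_le_ne_top ENNReal.one_ne_top (pp_le_one Z z w)) |>.2 hlt
  have : (1:ℝ≥0∞) < 1 := by
    calc (1:ℝ≥0∞) = ∑' v, pp Z z v * Z.P v hit0 := h1.symm
      _ < ∑' v, pp Z z v := ENNReal.tsum_lt_tsum (by rw [h1]; exact ENNReal.one_ne_top) hterm hstrict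
      _ = 1 := pp_sum Z z
  exact absurd this (lt_irrefl 1)

lemma hit_all (hrec : Z.Recurrent) (z : ℕ) (hz : Reach Z 0 z) : Z.P z hit0 = 1 := by
  induction hz with
  | refl => exact h_zero Z
  | tail hab hbc ih => exact hit_step Z hrec _ ih _ hbc

lemma measSet_le (m x₁ : ℕ) : MeasurableSet {ω : ℕ → ℕ | ω m ≤ x₁} := by
  have h : {ω : ℕ → ℕ | ω m ≤ x₁} = (fun ω : ℕ → ℕ => ω m) ⁻¹' {k | k ≤ x₁} := by ext; simp
  rw [h]; exact measurable_pi_apply m (by trivial)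

lemma lintegral_coord (z : ℕ) (f : ℕ → ℝ≥0∞) :
    ∫⁻ ω, f (ω 1) ∂(Z.P z) = ∑' w, pp Z z w * f w := by
  have hparts : (univ : Set (ℕ → ℕ)) = ⋃ w, {ω : ℕ → ℕ | ω 1 = w} := by
    ext ω; simp only [mem_univ, mem_iUnion, mem_setOf_eq, true_iff]; exact ⟨ω 1, rfl⟩
  have hd : Pairwise (Function.onFun Disjoint fun w => {ω : ℕ → ℕ | ω 1 = w}) := by
    intro i j hij
    refine Set.disjoint_left.2 fun ω hi hj => hij ?_
    rw [← hi, ← hj]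
  calc ∫⁻ ω, f (ω 1) ∂(Z.P z) = ∫⁻ ω in ⋃ w, {ω : ℕ → ℕ | ω 1 = w}, f (ω 1) ∂(Z.P z) := by
        rw [← hparts, Measure.restrict_univ]
    _ = ∑' w, ∫⁻ ω in {ω : ℕ → ℕ | ω 1 = w}, f (ω 1) ∂(Z.P z) :=
        lintegral_iUnion (fun w => measSet_coord 1 w) hd _
    _ = ∑' w, pp Z z w * f w := by
        refine tsum_congr fun w => ?_
        rw [setLIntegral_congr_fun (measSet_coord 1 w)
          (fun ω (hω : ω 1 = w) => by rw [hω])]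
        rw [setLIntegral_const, pp, mul_comm]

/-- hitting-probability bound from a Lyapunov function -/
lemma hitn_bound (x₁ : ℕ) (g : ℕ → ℝ≥0∞) (hfin : ∀ w, g w ≠ ⊤) (h0 : g x₁ ≠ 0)
    (hlow : ∀ w, w ≤ x₁ → g x₁ ≤ g w)
    (hsup : ∀ z, x₁ < z → ∑' w, pp Z z w * g w ≤ g z) :
    ∀ n, ∀ z, x₁ < z → Z.P z {ω | ∃ m, m ≤ n ∧ ω m ≤ x₁} ≤ g z / g x₁ := by
  intro n
  induction n with
  | zero =>
    intro z hz
    have hnull : Z.P z {ω | ∃ m, m ≤ 0 ∧ ω m ≤ x₁} = 0 := by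
      refine measure_mono_null ?_ (P_compl_init Z z)
      rintro ω ⟨m, hm, hle⟩
      interval_cases m
      intro (hω : ω 0 = z)
      rw [hω] at hle; omega
    rw [hnull]; exact zero_le
  | succ n ih =>
    intro z hz
    have hEm : MeasurableSet {ω : ℕ → ℕ | ∃ m, m ≤ n ∧ ω m ≤ x₁} := by
      have h : {ω : ℕ → ℕ | ∃ m, m ≤ n ∧ ω m ≤ x₁}
          = ⋃ m, ⋃ (_ : m ≤ n), {ω : ℕ → ℕ | ω m ≤ x₁} := by
        ext ω; simp
      rw [h]
      exact MeasurableSet.iUnion fun m => MeasurableSet.iUnion fun _ => measSet_le m x₁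
    have e2 : {ω : ℕ → ℕ | ∃ m, m ≤ n + 1 ∧ ω m ≤ x₁} ∩ {ω | ω 0 = z}
        = {ω | (fun k => ω (1 + k)) ∈ {ω' : ℕ → ℕ | ∃ m, m ≤ n ∧ ω' m ≤ x₁}}
          ∩ {ω | ω 0 = z} := by
      ext ω
      simp only [mem_inter_iff, mem_setOf_eq]
      constructor
      · rintro ⟨⟨m, hm, hle⟩, hω0⟩
        refine ⟨⟨m - 1, by omega, ?_⟩, hω0⟩
        have hm1 : 1 ≤ m := by
          rcases Nat.eq_zero_or_pos m with h | h
          · exfalso; rw [h] at hle; rw [hω0] at hle; omega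
          · exact h
        rw [show 1 + (m - 1) = m by omega]; exact hle
      · rintro ⟨⟨m, hm, hle⟩, hω0⟩
        exact ⟨⟨1 + m, by omega, hle⟩, hω0⟩
    have e1 : Z.P z {ω | ∃ m, m ≤ n + 1 ∧ ω m ≤ x₁}
        = ∑' w, pp Z z w * Z.P w {ω | ∃ m, m ≤ n ∧ ω m ≤ x₁} := by
      rw [← measure_inter_full Z z _ {ω | ω 0 = z} (P_compl_init Z z), e2,
        measure_inter_full Z z _ {ω | ω 0 = z} (P_compl_init Z z)]
      exact oneStep Z z _ hEm
    rw [e1]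
    have hbd : ∀ w, pp Z z w * Z.P w {ω | ∃ m, m ≤ n ∧ ω m ≤ x₁}
        ≤ pp Z z w * (g w / g x₁) := by
      intro w
      rcases le_or_gt w x₁ with hw | hw
      · refine mul_le_mul_right ?_ _
        have h1 : (1:ℝ≥0∞) ≤ g w / g x₁ :=
          ENNReal.le_div_iff_mul_le (Or.inl h0) (Or.inl (hfin x₁)) |>.2
            (by rw [one_mul]; exact hlow w hw)
        exact le_trans (by have := Z.isProb w; exact prob_le_one) h1
      · exact mul_le_mul_right (ih w hw) _
    calc ∑' w, pp Z z w * Z.P w {ω | ∃ m, m ≤ n ∧ ω m ≤ x₁}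
        ≤ ∑' w, pp Z z w * (g w / g x₁) := ENNReal.tsum_le_tsum hbd
      _ = (∑' w, pp Z z w * g w) / g x₁ := by
          rw [ENNReal.div_eq_inv_mul]
          rw [← ENNReal.tsum_mul_left]
          refine tsum_congr fun w => ?_
          rw [ENNReal.div_eq_inv_mul]; ring
      _ ≤ g z / g x₁ := ENNReal.div_le_div_right (hsup z hz) _

lemma hit_bound (x₁ : ℕ) (g : ℕ → ℝ≥0∞) (hfin : ∀ w, g w ≠ ⊤) (h0 : g x₁ ≠ 0)
    (hlow : ∀ w, w ≤ x₁ → g x₁ ≤ g w)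
    (hsup : ∀ z, x₁ < z → ∑' w, pp Z z w * g w ≤ g z)
    (z : ℕ) (hz : x₁ < z) :
    Z.P z {ω | ∃ m, ω m ≤ x₁} ≤ g z / g x₁ := by
  have hU : {ω : ℕ → ℕ | ∃ m, ω m ≤ x₁} = ⋃ n, {ω | ∃ m, m ≤ n ∧ ω m ≤ x₁} := by
    ext ω
    simp only [mem_setOf_eq, mem_iUnion]
    constructor
    · rintro ⟨m, hm⟩; exact ⟨m, m, le_refl m, hm⟩
    · rintro ⟨n, m, _, hm⟩; exact ⟨m, hm⟩
  have hdir : Directed (· ⊆ ·) fun n => {ω : ℕ → ℕ | ∃ m, m ≤ n ∧ ω m ≤ x₁} := by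
    intro i j
    refine ⟨max i j, fun ω => ?_, fun ω => ?_⟩ <;>
      · rintro ⟨m, hm, hle⟩; exact ⟨m, by omega, hle⟩
  rw [hU, hdir.measure_iUnion]
  exact iSup_le fun n => hitn_bound Z x₁ g hfin h0 hlow hsup n z hz

end Tr16
end Transience16

/-- Transience criterion: an irreducible Markov chain on `ℕ` with uniformly bounded
`(1+ε)`-moments and mean drift eventually bounded away from `0` from below is transient. -/
theorem stmt16 (Z : MChain ℕ) (hirr : Z.Irreducible)
    (hmom : ∃ ε : ℝ, 0 < ε ∧ ∃ C : ℝ≥0∞, C ≠ ⊤ ∧ ∀ z : ℕ,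
      (∫⁻ ω, ENNReal.ofReal (|(ω 1 : ℝ) - (z : ℝ)| ^ (1 + ε)) ∂(Z.P z)) ≤ C)
    (hdrift : 0 < Filter.atTop.liminf fun z : ℕ =>
      ∫ ω, ((ω 1 : ℝ) - (z : ℝ)) ∂(Z.P z)) :
    Z.Transient := by
  intro hrec
  classical
  obtain ⟨ε₀, hε₀, C, hCtop, hmomC⟩ := hmom
  have hPz : ∀ z : ℕ, IsProbabilityMeasure (Z.P z) := Z.isProb
  set ε : ℝ := min ε₀ 1 with hεdef
  have hε0 : 0 < ε := lt_min hε₀ one_pos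
  have hε1 : ε ≤ 1 := min_le_right _ _
  have hεε₀ : ε ≤ ε₀ := min_le_left _ _
  set α : ℝ := ε / 2 with hαdef
  have hα0 : 0 < α := by rw [hαdef]; positivity
  have hα1 : α ≤ 1 := by rw [hαdef]; linarith
  set C' : ℝ≥0∞ := C + 1 with hC'def
  have hC'top : C' ≠ ⊤ := by
    rw [hC'def]; exact ENNReal.add_ne_top.2 ⟨hCtop, ENNReal.one_ne_top⟩
  have hmeasC : ∀ (F : ℕ → ℝ), Measurable (fun ω : ℕ → ℕ => F (ω 1)) := fun F =>
    measurable_from_nat.comp (measurable_pi_apply 1)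
  -- transferred moment bound
  have hmom' : ∀ z : ℕ, (∫⁻ ω, ENNReal.ofReal (|(ω 1 : ℝ) - (z:ℝ)| ^ (1 + ε)) ∂(Z.P z)) ≤ C' := by
    intro z
    have hpt : ∀ ω : ℕ → ℕ, ENNReal.ofReal (|(ω 1 : ℝ) - (z:ℝ)| ^ (1+ε))
        ≤ ENNReal.ofReal (|(ω 1 : ℝ) - (z:ℝ)| ^ (1+ε₀)) + 1 := by
      intro ω
      rcases le_or_gt (|(ω 1 : ℝ) - (z:ℝ)|) 1 with h | h
      · calc ENNReal.ofReal (|(ω 1 : ℝ) - (z:ℝ)| ^ (1+ε)) ≤ ENNReal.ofReal 1 :=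
            ENNReal.ofReal_le_ofReal (Real.rpow_le_one (abs_nonneg _) h (by linarith))
          _ = 1 := ENNReal.ofReal_one
          _ ≤ _ := le_add_self
      · refine le_trans (ENNReal.ofReal_le_ofReal
          (Real.rpow_le_rpow_of_exponent_le h.le (by linarith))) le_self_add
    calc (∫⁻ ω, ENNReal.ofReal (|(ω 1 : ℝ) - (z:ℝ)| ^ (1+ε)) ∂(Z.P z))
        ≤ ∫⁻ ω, (ENNReal.ofReal (|(ω 1 : ℝ) - (z:ℝ)| ^ (1+ε₀)) + 1) ∂(Z.P z) :=
          lintegral_mono hpt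
      _ = (∫⁻ ω, ENNReal.ofReal (|(ω 1 : ℝ) - (z:ℝ)| ^ (1+ε₀)) ∂(Z.P z)) + 1 := by
          rw [lintegral_add_right _ measurable_const, lintegral_const, measure_univ, mul_one]
      _ ≤ C + 1 := add_le_add_left (hmomC z) 1
  have habs_le : ∀ d : ℝ, |d| ≤ |d| ^ (1+ε) + 1 := by
    intro d
    rcases le_or_gt (|d|) 1 with h | h
    · have h2 : (0:ℝ) ≤ |d| ^ (1+ε) := Real.rpow_nonneg (abs_nonneg d) _
      linarith
    · calc |d| = |d| ^ (1:ℝ) := (Real.rpow_one _).symm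
        _ ≤ |d| ^ (1+ε) := Real.rpow_le_rpow_of_exponent_le h.le (by linarith)
        _ ≤ |d| ^ (1+ε) + 1 := by linarith
  have habs_lint : ∀ z : ℕ,
      (∫⁻ ω, ENNReal.ofReal (|(ω 1 : ℝ) - (z:ℝ)|) ∂(Z.P z)) ≤ C' + 1 := by
    intro z
    calc (∫⁻ ω, ENNReal.ofReal (|(ω 1 : ℝ) - (z:ℝ)|) ∂(Z.P z))
        ≤ ∫⁻ ω, (ENNReal.ofReal (|(ω 1 : ℝ) - (z:ℝ)| ^ (1+ε)) + 1) ∂(Z.P z) := by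
          refine lintegral_mono fun ω => ?_
          refine le_trans (ENNReal.ofReal_le_ofReal (habs_le _)) ?_
          rw [ENNReal.ofReal_add (Real.rpow_nonneg (abs_nonneg _) _) zero_le_one,
            ENNReal.ofReal_one]
      _ = (∫⁻ ω, ENNReal.ofReal (|(ω 1 : ℝ) - (z:ℝ)| ^ (1+ε)) ∂(Z.P z)) + 1 := by
          rw [lintegral_add_right _ measurable_const, lintegral_const, measure_univ, mul_one]
      _ ≤ C' + 1 := add_le_add_left (hmom' z) 1
  -- integrability facts
  have hint_d : ∀ z : ℕ, Integrable (fun ω : ℕ → ℕ => ((ω 1 : ℝ) - (z:ℝ))) (Z.P z) := by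
    intro z
    refine ⟨(hmeasC (fun k => ((k:ℝ) - (z:ℝ)))).aestronglyMeasurable, ?_⟩
    rw [hasFiniteIntegral_iff_norm]
    refine lt_of_le_of_lt ?_ (lt_of_le_of_lt (le_refl (C' + 1))
      (by rw [lt_top_iff_ne_top]; exact ENNReal.add_ne_top.2 ⟨hC'top, ENNReal.one_ne_top⟩))
    simpa [Real.norm_eq_abs] using habs_lint z
  have hint_pow : ∀ z : ℕ,
      Integrable (fun ω : ℕ → ℕ => |(ω 1 : ℝ) - (z:ℝ)| ^ (1+ε)) (Z.P z) := by
    intro z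
    refine ⟨(hmeasC (fun k => |((k:ℝ) - (z:ℝ))| ^ (1+ε))).aestronglyMeasurable, ?_⟩
    rw [hasFiniteIntegral_iff_norm]
    refine lt_of_le_of_lt ?_ (lt_top_iff_ne_top.2 hC'top)
    refine le_trans (le_of_eq ?_) (hmom' z)
    refine lintegral_congr fun ω => ?_
    rw [Real.norm_eq_abs, abs_of_nonneg (Real.rpow_nonneg (abs_nonneg _) _)]
  have hint_g : ∀ z : ℕ, Integrable (fun ω : ℕ → ℕ => ((ω 1 : ℝ) + 1) ^ (-α)) (Z.P z) := by
    intro z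
    refine Integrable.mono' (integrable_const 1)
      ((hmeasC (fun k => ((k:ℝ) + 1) ^ (-α))).aestronglyMeasurable) ?_
    refine Filter.Eventually.of_forall fun ω => ?_
    rw [Real.norm_eq_abs, abs_of_nonneg (Real.rpow_nonneg (by positivity) _)]
    exact Real.rpow_le_one_of_one_le_of_nonpos
      (by have : (0:ℝ) ≤ (ω 1 : ℝ) := Nat.cast_nonneg _; linarith) (by linarith)
  have hpow_bound : ∀ z : ℕ,
      ∫ ω, |(ω 1 : ℝ) - (z:ℝ)| ^ (1+ε) ∂(Z.P z) ≤ C'.toReal := by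
    intro z
    rw [integral_eq_lintegral_of_nonneg_ae
      (Filter.Eventually.of_forall fun ω => Real.rpow_nonneg (abs_nonneg _) _)
      ((hmeasC (fun k => |((k:ℝ) - (z:ℝ))| ^ (1+ε))).aestronglyMeasurable)]
    exact ENNReal.toReal_mono hC'top (hmom' z)
  -- drift lower bound
  set μd : ℕ → ℝ := fun z => ∫ ω, ((ω 1 : ℝ) - (z:ℝ)) ∂(Z.P z) with hμddef
  have hbdd : Filter.atTop.IsBoundedUnder (· ≥ ·) μd := by
    refine isBoundedUnder_of ⟨-(C' + 1).toReal, fun z => ?_⟩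
    have h1 : |μd z| ≤ ∫ ω, |(ω 1 : ℝ) - (z:ℝ)| ∂(Z.P z) := by
      simpa [Real.norm_eq_abs] using
        norm_integral_le_integral_norm (f := fun ω : ℕ → ℕ => ((ω 1 : ℝ) - (z:ℝ))) (μ := Z.P z)
    have h2 : ∫ ω, |(ω 1 : ℝ) - (z:ℝ)| ∂(Z.P z) ≤ (C' + 1).toReal := by
      rw [integral_eq_lintegral_of_nonneg_ae (Filter.Eventually.of_forall fun ω => abs_nonneg _)
        ((hmeasC (fun k => |((k:ℝ) - (z:ℝ))|)).aestronglyMeasurable)]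
      exact ENNReal.toReal_mono (ENNReal.add_ne_top.2 ⟨hC'top, ENNReal.one_ne_top⟩) (habs_lint z)
    have h3 := abs_le.1 (h1.trans h2)
    exact h3.1
  have haev : ∀ᶠ z in Filter.atTop, (Filter.atTop.liminf μd) / 2 < μd z := by
    refine eventually_lt_of_lt_liminf ?_ hbdd
    have h0 := hdrift
    linarith [hdrift]
  set a : ℝ := (Filter.atTop.liminf μd) / 2 with hadef
  have ha0 : 0 < a := by rw [hadef]; linarith [hdrift]
  obtain ⟨xa, hxa⟩ := Filter.eventually_atTop.1 haev
  set Ct := C'.toReal with hCt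
  have hCt0 : (0:ℝ) ≤ Ct := ENNReal.toReal_nonneg
  have htend : Filter.Tendsto
      (fun z : ℕ => 32 * Ct * (z:ℝ) ^ (-ε) + 4 * Ct * (z:ℝ) ^ (-(ε/2)))
      Filter.atTop (nhds 0) := by
    have h1 : Filter.Tendsto (fun z : ℕ => ((z:ℝ)) ^ (-ε)) Filter.atTop (nhds 0) :=
      (tendsto_rpow_neg_atTop hε0).comp tendsto_natCast_atTop_atTop
    have h2 : Filter.Tendsto (fun z : ℕ => ((z:ℝ)) ^ (-(ε/2))) Filter.atTop (nhds 0) :=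
      (tendsto_rpow_neg_atTop (by linarith)).comp tendsto_natCast_atTop_atTop
    have := (h1.const_mul (32 * Ct)).add (h2.const_mul (4 * Ct))
    simpa using this
  have hev2 : ∀ᶠ z : ℕ in Filter.atTop,
      32 * Ct * (z:ℝ) ^ (-ε) + 4 * Ct * (z:ℝ) ^ (-(ε/2)) < α * a / 4 :=
    htend.eventually (gt_mem_nhds (by positivity))
  obtain ⟨xb, hxb⟩ := Filter.eventually_atTop.1 hev2
  set x₁ : ℕ := max (max xa xb) 2 with hx₁def
  -- supermartingale inequality
  have hsuper : ∀ z : ℕ, x₁ ≤ z →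
      ∫ ω, ((ω 1 : ℝ) + 1) ^ (-α) ∂(Z.P z) ≤ ((z:ℝ) + 1) ^ (-α) := by
    intro z hzx
    have hz2 : (2:ℝ) ≤ (z:ℝ) := by
      have h : (2:ℕ) ≤ z := le_trans (le_max_right (max xa xb) 2) hzx
      exact_mod_cast h
    have hz0 : (0:ℝ) < z := by linarith
    have hza : a ≤ μd z :=
      (hxa z (le_trans (le_trans (le_max_left xa xb) (le_max_left (max xa xb) 2)) hzx)).le
    have hzb : 32 * Ct * (z:ℝ) ^ (-ε) + 4 * Ct * (z:ℝ) ^ (-(ε/2)) ≤ α * a / 4 :=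
      (hxb z (le_trans (le_trans (le_max_right xa xb) (le_max_left (max xa xb) 2)) hzx)).le
    set c2 : ℝ := α * ((z:ℝ)+1) ^ (-α-1) with hc2def
    set Dz : ℝ := 32 * (z:ℝ) ^ (-α-1-ε) + 4 * (z:ℝ) ^ (-1-ε) with hDzdef
    have hpt : ∀ ω : ℕ → ℕ, ((ω 1 : ℝ) + 1) ^ (-α)
        ≤ ((z:ℝ)+1) ^ (-α) - c2 * ((ω 1 : ℝ) - (z:ℝ))
          + Dz * |(ω 1 : ℝ) - (z:ℝ)| ^ (1+ε) := by
      intro ω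
      have h := Tr16.key_ineq hα0 hα1 hε0 hε1 hz2 (Nat.cast_nonneg (ω 1))
      rw [hc2def, hDzdef]
      linarith [h]
    have hintR : Integrable (fun ω : ℕ → ℕ =>
        ((z:ℝ)+1) ^ (-α) - c2 * ((ω 1 : ℝ) - (z:ℝ))
          + Dz * |(ω 1 : ℝ) - (z:ℝ)| ^ (1+ε)) (Z.P z) :=
      ((integrable_const _).sub ((hint_d z).const_mul c2)).add ((hint_pow z).const_mul Dz)
    have hle := integral_mono (hint_g z) hintR hpt
    have hR : ∫ ω, (((z:ℝ)+1) ^ (-α) - c2 * ((ω 1 : ℝ) - (z:ℝ))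
          + Dz * |(ω 1 : ℝ) - (z:ℝ)| ^ (1+ε)) ∂(Z.P z)
        = ((z:ℝ)+1) ^ (-α) - c2 * μd z
          + Dz * ∫ ω, |(ω 1 : ℝ) - (z:ℝ)| ^ (1+ε) ∂(Z.P z) := by
      have i1 : Integrable (fun ω : ℕ → ℕ => ((z:ℝ)+1) ^ (-α) - c2 * ((ω 1 : ℝ) - (z:ℝ)))
          (Z.P z) := (integrable_const _).sub ((hint_d z).const_mul c2)
      have i2 : Integrable (fun ω : ℕ → ℕ => Dz * |(ω 1 : ℝ) - (z:ℝ)| ^ (1+ε)) (Z.P z) :=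
        (hint_pow z).const_mul Dz
      rw [integral_add i1 i2,
        integral_sub (integrable_const (((z:ℝ)+1) ^ (-α))) ((hint_d z).const_mul c2),
        integral_const, integral_const_mul, integral_const_mul]
      simp [hμddef]
    have hc2nn : (0:ℝ) ≤ c2 := by
      rw [hc2def]; exact mul_nonneg hα0.le (Real.rpow_nonneg (by linarith) _)
    have hDznn : (0:ℝ) ≤ Dz := by
      rw [hDzdef]
      have := Real.rpow_nonneg hz0.le (-α-1-ε)
      have := Real.rpow_nonneg hz0.le (-1-ε)
      linarith
    have hM := hpow_bound z
    have hnum : Dz * Ct ≤ c2 * a := by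
      have h14 : (1/4 : ℝ) * (z:ℝ) ^ (-α-1) ≤ ((z:ℝ)+1) ^ (-α-1) := by
        have e1 : ((2:ℝ)*(z:ℝ)) ^ (-α-1) ≤ ((z:ℝ)+1) ^ (-α-1) := by
          refine Real.rpow_le_rpow_of_nonpos (by linarith) (by linarith) (by linarith)
        have e2 : ((2:ℝ)*(z:ℝ)) ^ (-α-1) = 2 ^ (-α-1) * (z:ℝ) ^ (-α-1) :=
          Real.mul_rpow (by norm_num) hz0.le
        have e3 : (1/4:ℝ) ≤ (2:ℝ) ^ (-α-1) := by
          have e5 : (2:ℝ) ^ (-2:ℝ) ≤ (2:ℝ) ^ (-α-1) :=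
            Real.rpow_le_rpow_of_exponent_le one_le_two (by linarith)
          have e4 : (2:ℝ) ^ (-2:ℝ) = 1/4 := by
            rw [show (-2:ℝ) = -((2:ℕ):ℝ) from by norm_num,
              Real.rpow_neg (by norm_num : (0:ℝ) ≤ 2), Real.rpow_natCast]
            norm_num
          calc (1/4:ℝ) = (2:ℝ) ^ (-2:ℝ) := e4.symm
            _ ≤ (2:ℝ) ^ (-α-1) := e5
        calc (1/4:ℝ) * (z:ℝ) ^ (-α-1)
            ≤ (2:ℝ) ^ (-α-1) * (z:ℝ) ^ (-α-1) :=
              mul_le_mul_of_nonneg_right e3 (Real.rpow_nonneg hz0.le _)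
          _ = ((2:ℝ)*(z:ℝ)) ^ (-α-1) := e2.symm
          _ ≤ ((z:ℝ)+1) ^ (-α-1) := e1
      have efac1 : (z:ℝ) ^ (-α-1-ε) = (z:ℝ) ^ (-α-1) * (z:ℝ) ^ (-ε) := by
        rw [← Real.rpow_add hz0]; ring_nf
      have efac2 : (z:ℝ) ^ (-1-ε) = (z:ℝ) ^ (-α-1) * (z:ℝ) ^ (-(ε/2)) := by
        rw [← Real.rpow_add hz0]; congr 1; rw [hαdef]; ring
      have hfac : Dz * Ct
          = (z:ℝ) ^ (-α-1) * (32 * Ct * (z:ℝ) ^ (-ε) + 4 * Ct * (z:ℝ) ^ (-(ε/2))) := by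
        rw [hDzdef, efac1, efac2]; ring
      calc Dz * Ct
          = (z:ℝ) ^ (-α-1) * (32 * Ct * (z:ℝ) ^ (-ε) + 4 * Ct * (z:ℝ) ^ (-(ε/2))) := hfac
        _ ≤ (z:ℝ) ^ (-α-1) * (α * a / 4) :=
            mul_le_mul_of_nonneg_left hzb (Real.rpow_nonneg hz0.le _)
        _ = (α * a) * ((1/4) * (z:ℝ) ^ (-α-1)) := by ring
        _ ≤ (α * a) * (((z:ℝ)+1) ^ (-α-1)) :=
            mul_le_mul_of_nonneg_left h14 (by positivity)
        _ = c2 * a := by rw [hc2def]; ring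
    have g1 : c2 * a ≤ c2 * μd z := mul_le_mul_of_nonneg_left hza hc2nn
    have g2 : Dz * (∫ ω, |(ω 1 : ℝ) - (z:ℝ)| ^ (1+ε) ∂(Z.P z)) ≤ Dz * Ct :=
      mul_le_mul_of_nonneg_left hM hDznn
    calc ∫ ω, ((ω 1 : ℝ) + 1) ^ (-α) ∂(Z.P z)
        ≤ ∫ ω, (((z:ℝ)+1) ^ (-α) - c2 * ((ω 1 : ℝ) - (z:ℝ))
            + Dz * |(ω 1 : ℝ) - (z:ℝ)| ^ (1+ε)) ∂(Z.P z) := hle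
      _ = ((z:ℝ)+1) ^ (-α) - c2 * μd z
            + Dz * ∫ ω, |(ω 1 : ℝ) - (z:ℝ)| ^ (1+ε) ∂(Z.P z) := hR
      _ ≤ ((z:ℝ)+1) ^ (-α) := by linarith
  -- the ENNReal Lyapunov function
  set gE : ℕ → ℝ≥0∞ := fun w => ENNReal.ofReal (((w:ℝ)+1) ^ (-α)) with hgEdef
  have hgfin : ∀ w, gE w ≠ ⊤ := fun w => ENNReal.ofReal_ne_top
  have hgpos : ∀ w : ℕ, gE w ≠ 0 := by
    intro w
    rw [hgEdef]
    simp only [ne_eq, ENNReal.ofReal_eq_zero, not_le]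
    positivity
  have hglow : ∀ w, w ≤ x₁ → gE x₁ ≤ gE w := by
    intro w hw
    refine ENNReal.ofReal_le_ofReal
      (Real.rpow_le_rpow_of_nonpos (by positivity) ?_ (by linarith))
    have : (w:ℝ) ≤ (x₁:ℝ) := by exact_mod_cast hw
    linarith
  have hsupE : ∀ z, x₁ < z → ∑' w, Tr16.pp Z z w * gE w ≤ gE z := by
    intro z hz
    rw [← Tr16.lintegral_coord Z z gE]
    have he : ∫⁻ ω, gE (ω 1) ∂(Z.P z)
        = ∫⁻ ω, ENNReal.ofReal (((ω 1 : ℝ) + 1) ^ (-α)) ∂(Z.P z) := rfl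
    rw [he, ← ofReal_integral_eq_lintegral_ofReal (hint_g z)
      (Filter.Eventually.of_forall fun ω => Real.rpow_nonneg (by positivity) _)]
    exact ENNReal.ofReal_le_ofReal (hsuper z hz.le)
  have hhit := Tr16.hit_bound Z x₁ gE hgfin (hgpos x₁) hglow hsupE (x₁+1) (Nat.lt_succ_self x₁)
  obtain ⟨n, hn⟩ := hirr 0 (x₁+1)
  have hreach : Tr16.Reach Z 0 (x₁+1) := Tr16.reach_of_pos Z 0 n (x₁+1) hn
  have hone : Z.P (x₁+1) Tr16.hit0 = 1 := Tr16.hit_all Z hrec (x₁+1) hreach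
  have hsub : Tr16.hit0 ⊆ {ω : ℕ → ℕ | ∃ m, ω m ≤ x₁} := by
    rintro ω ⟨k, hk⟩
    exact ⟨k, by omega⟩
  have h1le : (1:ℝ≥0∞) ≤ gE (x₁+1) / gE x₁ := by
    calc (1:ℝ≥0∞) = Z.P (x₁+1) Tr16.hit0 := hone.symm
      _ ≤ Z.P (x₁+1) {ω : ℕ → ℕ | ∃ m, ω m ≤ x₁} := measure_mono hsub
      _ ≤ gE (x₁+1) / gE x₁ := hhit
  have hlt : gE (x₁+1) / gE x₁ < 1 := by
    have hstrict : gE (x₁+1) < gE x₁ := by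
      rw [hgEdef]
      refine (ENNReal.ofReal_lt_ofReal_iff (by positivity)).2 ?_
      refine Real.rpow_lt_rpow_of_neg (by positivity) ?_ (by linarith)
      push_cast
      linarith
    refine (ENNReal.div_lt_iff (Or.inl (hgpos x₁)) (Or.inl (hgfin x₁))).2 ?_
    rwa [one_mul]
  exact absurd (lt_of_le_of_lt h1le hlt) (lt_irrefl 1)
end
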